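/- arXiv:2106.14980 — 6 statements merged into one kernel-verified Lean document; each statement's English description precedes it below -/
import Mathlib

section
/- Let d ∈ ℤ_{≥1}, let n ≥ 2, and let A ∈ ℤ^{m×n} with m ≥ n be nondegenerate, i.e., every n×n subdeterminant of A is nonzero. If |D(A)| ≤ d, then m ≤ (n−1) + d·(2·d + 1). -/
/-- `detSet A` is the set of absolute values of the `n × n` subdeterminants of `A`,
i.e. `D(A) = {|det(A_{I,·})| : I ⊆ [m], |I| = n}`. -/
def detSet {m n : ℕ} (A : Matrix (Fin m) (Fin n) ℤ) : Set ℤ :=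
  {d : ℤ | ∃ f : Fin n → Fin m, Function.Injective f ∧ d = |(A.submatrix f id).det|}


section Aux
variable {m n : ℕ}

def gfun (hmn : n ≤ m) (i1 i2 : Fin m) : Fin n → Fin m :=
  fun j => if (j : ℕ) < n - 2 then Fin.castLE hmn j else if (j : ℕ) = n - 2 then i1 else i2


def Mk (hmn : n ≤ m) (A : Matrix (Fin m) (Fin n) ℤ) (x y : Fin n → ℚ) :
    Matrix (Fin n) (Fin n) ℚ :=
  Matrix.of fun j => if (j : ℕ) < n - 2 then (fun k => ((A (Fin.castLE hmn j) k : ℤ) : ℚ))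
    else if (j : ℕ) = n - 2 then x else y

def br (hmn : n ≤ m) (A : Matrix (Fin m) (Fin n) ℤ) (x y : Fin n → ℚ) : ℚ :=
  (Mk hmn A x y).det


def Dm (hmn : n ≤ m) (A : Matrix (Fin m) (Fin n) ℤ) (i1 i2 : Fin m) : ℤ :=
  (A.submatrix (gfun hmn i1 i2) id).det

lemma gfun_inj (hmn : n ≤ m) {i1 i2 : Fin m} (h1 : n - 2 ≤ (i1 : ℕ)) (h2 : n - 2 ≤ (i2 : ℕ))
    (h12 : i1 ≠ i2) : Function.Injective (gfun hmn i1 i2) := by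
  intro j1 j2 h
  have hval := congrArg Fin.val h
  have hne : (i1 : ℕ) ≠ (i2 : ℕ) := fun hh => h12 (Fin.ext hh)
  have hj1 := j1.2
  have hj2 := j2.2
  simp only [gfun] at hval
  apply Fin.ext
  split_ifs at hval <;> first
    | omega
    | (simp only [Fin.coe_castLE] at hval; omega)

lemma br_cast (hmn : n ≤ m) (A : Matrix (Fin m) (Fin n) ℤ) (i1 i2 : Fin m) :
    br hmn A (fun k => ((A i1 k : ℤ) : ℚ)) (fun k => ((A i2 k : ℤ) : ℚ))
      = ((Dm hmn A i1 i2 : ℤ) : ℚ) := by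
  rw [br, Dm]
  rw [show (((A.submatrix (gfun hmn i1 i2) id).det : ℤ) : ℚ)
      = (Int.castRingHom ℚ) (A.submatrix (gfun hmn i1 i2) id).det from rfl, RingHom.map_det]
  congr 1
  ext j k
  simp only [Mk, gfun, Matrix.of_apply, RingHom.mapMatrix_apply, Matrix.map_apply,
    Matrix.submatrix_apply, id_eq, eq_intCast]
  split_ifs <;> rfl

lemma Mk_row_base (hmn : n ≤ m) (A : Matrix (Fin m) (Fin n) ℤ) (x y : Fin n → ℚ)
    (j : Fin n) (hj : (j : ℕ) < n - 2) :
    Mk hmn A x y j = fun k => ((A (Fin.castLE hmn j) k : ℤ) : ℚ) := by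
  funext k
  simp only [Mk, Matrix.of_apply]
  rw [if_pos hj]

lemma Mk_row_x (hmn : n ≤ m) (A : Matrix (Fin m) (Fin n) ℤ) (x y : Fin n → ℚ)
    (j : Fin n) (hj : (j : ℕ) = n - 2) : Mk hmn A x y j = x := by
  funext k
  simp only [Mk, Matrix.of_apply]
  rw [if_neg (by omega), if_pos hj]

lemma Mk_row_y (hmn : n ≤ m) (A : Matrix (Fin m) (Fin n) ℤ) (x y : Fin n → ℚ)
    (j : Fin n) (hj : n - 2 < (j : ℕ)) : Mk hmn A x y j = y := by
  funext k
  simp only [Mk, Matrix.of_apply]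
  rw [if_neg (by omega), if_neg (by omega)]

lemma Mk_updateRow (hn : 2 ≤ n) (hmn : n ≤ m) (A : Matrix (Fin m) (Fin n) ℤ)
    (x w w' : Fin n → ℚ) :
    Mk hmn A x w = (Mk hmn A x w').updateRow ⟨n - 1, by omega⟩ w := by
  ext j k
  rw [Matrix.updateRow_apply]
  split_ifs with h
  · rw [h, congrFun (Mk_row_y hmn A x w ⟨n-1, by omega⟩ (by simp; omega)) k]
  · have hjne : (j : ℕ) ≠ n - 1 := fun hh => h (Fin.ext hh)
    have hj2 := j.2
    rcases (by omega : (j : ℕ) < n - 2 ∨ (j : ℕ) = n - 2) with hc | hc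
    · rw [congrFun (Mk_row_base hmn A x w j hc) k, congrFun (Mk_row_base hmn A x w' j hc) k]
    · rw [congrFun (Mk_row_x hmn A x w j hc) k, congrFun (Mk_row_x hmn A x w' j hc) k]

lemma det_updateRow_lin (M : Matrix (Fin n) (Fin n) ℚ) (j : Fin n) (s : Finset (Fin n))
    (c : Fin n → ℚ) (v : Fin n → (Fin n → ℚ)) :
    (M.updateRow j (∑ k ∈ s, c k • v k)).det = ∑ k ∈ s, c k * (M.updateRow j (v k)).det := by
  classical
  induction s using Finset.induction_on with
  | empty =>
      simp only [Finset.sum_empty]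
      exact Matrix.det_eq_zero_of_row_eq_zero j (fun k => by simp)
  | insert _ _ hk ih =>
      rw [Finset.sum_insert hk, Finset.sum_insert hk, Matrix.det_updateRow_add,
        Matrix.det_updateRow_smul, ih]

lemma br_sum (hn : 2 ≤ n) (hmn : n ≤ m) (A : Matrix (Fin m) (Fin n) ℤ)
    (x : Fin n → ℚ) (c : Fin n → ℚ) (v : Fin n → (Fin n → ℚ)) :
    br hmn A x (∑ k, c k • v k) = ∑ k, c k * br hmn A x (v k) := by
  rw [br, Mk_updateRow hn hmn A x _ (fun _ => (0:ℚ)), det_updateRow_lin]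
  refine Finset.sum_congr rfl (fun k _ => ?_)
  rw [br, Mk_updateRow hn hmn A x (v k) (fun _ => (0:ℚ))]

lemma br_two (hn : 2 ≤ n) (hmn : n ≤ m) (A : Matrix (Fin m) (Fin n) ℤ)
    (x u v : Fin n → ℚ) (p q : ℚ) :
    br hmn A x (p • u + q • v) = p * br hmn A x u + q * br hmn A x v := by
  rw [br, Mk_updateRow hn hmn A x _ u, Matrix.det_updateRow_add,
    Matrix.det_updateRow_smul, Matrix.det_updateRow_smul, ← Mk_updateRow hn hmn A x u u]
  rw [br, br, Mk_updateRow hn hmn A x v u]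

lemma br_self (hn : 2 ≤ n) (hmn : n ≤ m) (A : Matrix (Fin m) (Fin n) ℤ) (x : Fin n → ℚ) :
    br hmn A x x = 0 := by
  refine Matrix.det_zero_of_row_eq (i := (⟨n-2, by omega⟩ : Fin n)) (j := ⟨n-1, by omega⟩)
    (by simp [Fin.ext_iff]; omega) ?_
  rw [Mk_row_x hmn A x x _ (by simp), Mk_row_y hmn A x x _ (by simp; omega)]

lemma br_base (hn : 2 ≤ n) (hmn : n ≤ m) (A : Matrix (Fin m) (Fin n) ℤ) (x : Fin n → ℚ)
    (j : Fin n) (hj : (j : ℕ) < n - 2) :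
    br hmn A x (fun k => ((A (Fin.castLE hmn j) k : ℤ) : ℚ)) = 0 := by
  refine Matrix.det_zero_of_row_eq (i := j) (j := ⟨n-1, by omega⟩)
    (by simp [Fin.ext_iff]; omega) ?_
  rw [Mk_row_base hmn A _ _ j hj, Mk_row_y hmn A _ _ _ (by simp; omega)]

end Aux

section Key
variable {m n : ℕ}

lemma exists_lam (hmn : n ≤ m) (A : Matrix (Fin m) (Fin n) ℤ) (u v : Fin n → ℚ)
    (hdet : (Mk hmn A u v).det ≠ 0) (z : Fin n → ℚ) :
    ∃ lam : Fin n → ℚ, z = ∑ k, lam k • (Mk hmn A u v) k := by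
  refine ⟨Matrix.vecMul z (Mk hmn A u v)⁻¹, ?_⟩
  have hU : IsUnit (Mk hmn A u v).det := isUnit_iff_ne_zero.2 hdet
  have hzB : Matrix.vecMul (Matrix.vecMul z (Mk hmn A u v)⁻¹) (Mk hmn A u v) = z := by
    rw [Matrix.vecMul_vecMul, Matrix.nonsing_inv_mul _ hU, Matrix.vecMul_one]
  funext t
  conv_lhs => rw [← hzB]
  simp [Matrix.vecMul, dotProduct, Finset.sum_apply]

lemma br_decomp (hn : 2 ≤ n) (hmn : n ≤ m) (A : Matrix (Fin m) (Fin n) ℤ)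
    (u v z : Fin n → ℚ) (lam : Fin n → ℚ)
    (hzsum : z = ∑ k, lam k • (Mk hmn A u v) k) (x : Fin n → ℚ) :
    br hmn A x z = lam ⟨n-2, by omega⟩ * br hmn A x u
      + lam ⟨n-1, by omega⟩ * br hmn A x v := by
  have hnel : (⟨n-2, by omega⟩ : Fin n) ≠ ⟨n-1, by omega⟩ :=
    Fin.ne_of_val_ne (show n - 2 ≠ n - 1 by omega)
  rw [hzsum, br_sum hn hmn A x lam (Mk hmn A u v)]
  have hsplit : (Finset.univ : Finset (Fin n)) = insert (⟨n-2, by omega⟩ : Fin n)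
      (insert (⟨n-1, by omega⟩ : Fin n)
        (Finset.univ \ {(⟨n-2, by omega⟩ : Fin n), (⟨n-1, by omega⟩ : Fin n)})) := by
    ext k
    simp only [Finset.mem_univ, Finset.mem_insert, Finset.mem_sdiff, Finset.mem_singleton,
      true_iff, true_and]
    tauto
  rw [hsplit, Finset.sum_insert, Finset.sum_insert]
  · rw [Mk_row_x hmn A u v _ rfl, Mk_row_y hmn A u v _ (show n - 2 < n - 1 by omega)]
    have hrest : ∑ k ∈ Finset.univ \ {(⟨n-2, by omega⟩ : Fin n), (⟨n-1, by omega⟩ : Fin n)},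
        lam k * br hmn A x (Mk hmn A u v k) = 0 := by
      refine Finset.sum_eq_zero (fun k hk => ?_)
      simp only [Finset.mem_sdiff, Finset.mem_insert, Finset.mem_singleton] at hk
      have hkv : (k : ℕ) < n - 2 := by
        have h2 := k.2
        have e1 : (k : ℕ) ≠ n - 2 := fun h => hk.2 (Or.inl (Fin.ext h))
        have e2 : (k : ℕ) ≠ n - 1 := fun h => hk.2 (Or.inr (Fin.ext h))
        omega
      rw [Mk_row_base hmn A u v k hkv, br_base hn hmn A x k hkv, mul_zero]
    rw [hrest, add_zero]
  · simp
  · simp [Fin.ext_iff]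
    omega

end Key


lemma Dm_self (hn : 2 ≤ n) (hmn : n ≤ m) (A : Matrix (Fin m) (Fin n) ℤ) (ri : Fin m) :
    Dm hmn A ri ri = 0 := by
  refine Matrix.det_zero_of_row_eq (i := (⟨n-2, by omega⟩ : Fin n)) (j := ⟨n-1, by omega⟩)
    (Fin.ne_of_val_ne (show n - 2 ≠ n - 1 by omega)) ?_
  funext k
  simp only [Matrix.submatrix_apply, gfun, id_eq]
  rw [if_neg (by simp), if_pos (by simp), if_neg (show ¬ ((n:ℕ) - 1 < n - 2) by omega),
    if_neg (show ¬ ((n:ℕ) - 1 = n - 2) by omega)]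

set_option maxHeartbeats 2000000 in
lemma keylemma (hn : 2 ≤ n) (hmn : n ≤ m) (A : Matrix (Fin m) (Fin n) ℤ)
    (hnondeg : ∀ f : Fin n → Fin m, Function.Injective f → (A.submatrix f id).det ≠ 0)
    (r1 ri rj : Fin m) (hr1 : n - 1 ≤ (r1 : ℕ)) (hri : n - 1 ≤ (ri : ℕ))
    (hrj : n - 1 ≤ (rj : ℕ))
    (h1i : r1 ≠ ri) (h1j : r1 ≠ rj) (hij : ri ≠ rj)
    (εi εj : ℤ) (hεi : εi = 1 ∨ εi = -1) (hεj : εj = 1 ∨ εj = -1)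
    (H1 : εi * Dm hmn A ⟨n-2, by omega⟩ ri = εj * Dm hmn A ⟨n-2, by omega⟩ rj)
    (H2 : εi * Dm hmn A r1 ri = εj * Dm hmn A r1 rj) : False := by
  have hnm2 : n - 2 < m := by omega
  have hne_a0r1 : (⟨n-2, hnm2⟩ : Fin m) ≠ r1 := Fin.ne_of_val_ne (by simp; omega)
  have hDa0r1 : Dm hmn A ⟨n-2, hnm2⟩ r1 ≠ 0 :=
    hnondeg _ (gfun_inj hmn (by simp) (by omega) hne_a0r1)
  have hDr1a0 : Dm hmn A r1 ⟨n-2, hnm2⟩ ≠ 0 :=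
    hnondeg _ (gfun_inj hmn (by omega) (by simp) (Ne.symm hne_a0r1))
  have hDij : Dm hmn A ri rj ≠ 0 :=
    hnondeg _ (gfun_inj hmn (by omega) (by omega) hij)
  have hcast : ∀ i1 i2 : Fin m,
      br hmn A (fun k => ((A i1 k : ℤ) : ℚ)) (fun k => ((A i2 k : ℤ) : ℚ))
        = ((Dm hmn A i1 i2 : ℤ) : ℚ) := fun i1 i2 => br_cast hmn A i1 i2
  have hdetB : (Mk hmn A (fun k => ((A (⟨n-2, hnm2⟩ : Fin m) k : ℤ) : ℚ))
      (fun k => ((A r1 k : ℤ) : ℚ))).det ≠ 0 := by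
    rw [show (Mk hmn A (fun k => ((A (⟨n-2, hnm2⟩ : Fin m) k : ℤ) : ℚ))
      (fun k => ((A r1 k : ℤ) : ℚ))).det = ((Dm hmn A ⟨n-2, hnm2⟩ r1 : ℤ) : ℚ)
      from hcast _ _]
    exact_mod_cast hDa0r1
  obtain ⟨lam, hlam⟩ := exists_lam hmn A _ _ hdetB
    ((εi : ℚ) • (fun k => ((A ri k : ℤ) : ℚ)) + (-(εj : ℚ)) • (fun k => ((A rj k : ℤ) : ℚ)))
  have key := br_decomp hn hmn A _ _ _ lam hlam
  have hεj0 : (εj : ℚ) ≠ 0 := by rcases hεj with h | h <;> simp [h]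
  -- values of br x z for the three relevant x
  have hz_a0 : br hmn A (fun k => ((A (⟨n-2, hnm2⟩ : Fin m) k : ℤ) : ℚ))
      ((εi : ℚ) • (fun k => ((A ri k : ℤ) : ℚ)) + (-(εj : ℚ)) • (fun k => ((A rj k : ℤ) : ℚ)))
      = 0 := by
    rw [br_two hn hmn, hcast, hcast]
    have := congrArg (fun t : ℤ => (t : ℚ)) H1
    push_cast at this ⊢
    linarith
  have hz_r1 : br hmn A (fun k => ((A r1 k : ℤ) : ℚ))
      ((εi : ℚ) • (fun k => ((A ri k : ℤ) : ℚ)) + (-(εj : ℚ)) • (fun k => ((A rj k : ℤ) : ℚ)))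
      = 0 := by
    rw [br_two hn hmn, hcast, hcast]
    have := congrArg (fun t : ℤ => (t : ℚ)) H2
    push_cast at this ⊢
    linarith
  have hlast0 : lam ⟨n-1, by omega⟩ = 0 := by
    have h := key (fun k => ((A (⟨n-2, hnm2⟩ : Fin m) k : ℤ) : ℚ))
    rw [hz_a0, br_self hn hmn, mul_zero, zero_add, hcast] at h
    have hne : ((Dm hmn A ⟨n-2, hnm2⟩ r1 : ℤ) : ℚ) ≠ 0 := by exact_mod_cast hDa0r1
    exact (mul_eq_zero.1 h.symm).resolve_right hne
  have ha00 : lam ⟨n-2, by omega⟩ = 0 := by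
    have h := key (fun k => ((A r1 k : ℤ) : ℚ))
    rw [hz_r1, br_self hn hmn, mul_zero, add_zero, hcast] at h
    have hne : ((Dm hmn A r1 ⟨n-2, hnm2⟩ : ℤ) : ℚ) ≠ 0 := by exact_mod_cast hDr1a0
    exact (mul_eq_zero.1 h.symm).resolve_right hne
  have hzero := key (fun k => ((A ri k : ℤ) : ℚ))
  rw [hlast0, ha00, zero_mul, zero_mul, add_zero] at hzero
  rw [br_two hn hmn, hcast, hcast] at hzero
  rw [Dm_self hn hmn] at hzero
  push_cast at hzero
  have : ((Dm hmn A ri rj : ℤ) : ℚ) = 0 := by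
    have : -(εj : ℚ) * ((Dm hmn A ri rj : ℤ) : ℚ) = 0 := by linarith
    rcases mul_eq_zero.1 this with h | h
    · exact absurd h (by simpa using hεj0)
    · exact h
  exact hDij (by exact_mod_cast this)

set_option maxHeartbeats 1000000 in
/-- If `A ∈ ℤ^{m×n}` (`m ≥ n`, `n ≥ 2`) is nondegenerate (all `n×n` subdeterminants are
nonzero) and `|D(A)| ≤ d`, then `m ≤ (n-1) + d(2d+1)`. -/
theorem stmt1 (d m n : ℕ) (hd : 1 ≤ d) (hn : 2 ≤ n) (hmn : n ≤ m)
    (A : Matrix (Fin m) (Fin n) ℤ)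
    (hnondeg : ∀ f : Fin n → Fin m, Function.Injective f → (A.submatrix f id).det ≠ 0)
    (hcard : (detSet A).ncard ≤ d) :
    m ≤ (n - 1) + d * (2 * d + 1) := by
  by_contra hcon
  push_neg at hcon
  have hnm2 : n - 2 < m := by omega
  have hnm1 : n - 1 < m := by omega
  have hfin : (detSet A).Finite := by
    refine Set.Finite.subset (Set.finite_range
      (fun f : Fin n → Fin m => |(A.submatrix f id).det|)) ?_
    rintro x ⟨f, _, rfl⟩
    exact ⟨f, rfl⟩
  have hmem : ∀ i1 i2 : Fin m, n - 2 ≤ (i1 : ℕ) → n - 2 ≤ (i2 : ℕ) → i1 ≠ i2 →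
      |Dm hmn A i1 i2| ∈ detSet A := fun i1 i2 h1 h2 h12 =>
    ⟨gfun hmn i1 i2, gfun_inj hmn h1 h2 h12, rfl⟩
  have himg : ∀ (S : Finset (Fin m)) (f : Fin m → ℤ),
      (∀ r ∈ S, f r ∈ detSet A) → (S.image f).card ≤ d := by
    intro S f hsub
    calc (S.image f).card = ((S.image f : Finset ℤ) : Set ℤ).ncard :=
          (Set.ncard_coe_finset _).symm
      _ ≤ (detSet A).ncard := by
          refine Set.ncard_le_ncard ?_ hfin
          intro x hx
          simp only [Finset.coe_image, Set.mem_image, Finset.mem_coe] at hx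
          obtain ⟨r, hr, rfl⟩ := hx
          exact hsub r hr
      _ ≤ d := hcard
  have hsign : ∀ x : ℤ, (if 0 ≤ x then (1:ℤ) else -1) * x = |x| := by
    intro x
    split_ifs with h
    · simp [abs_of_nonneg h]
    · rw [abs_of_neg (lt_of_not_ge h)]; ring
  -- the set of "extra" rows
  set T : Finset (Fin m) := Finset.Ici (⟨n-1, hnm1⟩ : Fin m) with hT
  have hTmem : ∀ r : Fin m, r ∈ T ↔ n - 1 ≤ (r : ℕ) := by
    intro r
    rw [hT, Finset.mem_Ici, Fin.le_def]
  have hTcard : T.card = m - (n - 1) := by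
    rw [hT, Fin.card_Ici]
  -- fibers of the first map have size at most 2d+1
  have hfiber : ∀ b ∈ T.image (fun r => |Dm hmn A ⟨n-2, hnm2⟩ r|),
      (T.filter (fun r => |Dm hmn A ⟨n-2, hnm2⟩ r| = b)).card ≤ 2 * d + 1 := by
    intro b _
    set Tc := T.filter (fun r => |Dm hmn A ⟨n-2, hnm2⟩ r| = b) with hTc
    by_contra hbig
    push_neg at hbig
    have hne : Tc.Nonempty := Finset.card_pos.1 (by omega)
    obtain ⟨r1, hr1⟩ := hne
    have hr1T : r1 ∈ T ∧ |Dm hmn A ⟨n-2, hnm2⟩ r1| = b := Finset.mem_filter.1 hr1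
    set T' := Tc.erase r1 with hT'
    have hT'card : T'.card = Tc.card - 1 := Finset.card_erase_of_mem hr1
    have hT'facts : ∀ r ∈ T', r ∈ T ∧ r ≠ r1 ∧ |Dm hmn A ⟨n-2, hnm2⟩ r| = b := by
      intro r hr
      have h1 := Finset.mem_of_mem_erase hr
      exact ⟨(Finset.mem_filter.1 h1).1, Finset.ne_of_mem_erase hr, (Finset.mem_filter.1 h1).2⟩
    -- second map fibers have size ≤ 2
    have hfib2 : ∀ e ∈ T'.image (fun r => |Dm hmn A r1 r|),
        (T'.filter (fun r => |Dm hmn A r1 r| = e)).card ≤ 2 := by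
      intro e he
      have he0 : 0 ≤ e := by
        simp only [Finset.mem_image] at he
        obtain ⟨r, _, rfl⟩ := he
        exact abs_nonneg _
      refine le_trans (Finset.card_le_card_of_injOn
        (fun r => (if 0 ≤ Dm hmn A ⟨n-2, hnm2⟩ r then (1:ℤ) else -1) * Dm hmn A r1 r)
        (t := ({e, -e} : Finset ℤ)) ?_ ?_)
        (le_trans (Finset.card_insert_le _ _) (by simp))
      · intro r hr
        have h1 := (Finset.mem_filter.1 hr).2
        have : |(if 0 ≤ Dm hmn A ⟨n-2, hnm2⟩ r then (1:ℤ) else -1) * Dm hmn A r1 r| = e := by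
          rw [abs_mul]
          split_ifs <;> simpa using h1
        rcases (abs_eq he0).1 this with h | h <;> simp [h]
      · intro i hi j hj hij
        by_contra hne2
        have hfi := Finset.mem_filter.1 hi
        have hfj := Finset.mem_filter.1 hj
        obtain ⟨hiT, hir1, hib⟩ := hT'facts i hfi.1
        obtain ⟨hjT, hjr1, hjb⟩ := hT'facts j hfj.1
        refine keylemma hn hmn A hnondeg r1 i j ((hTmem r1).1 hr1T.1) ((hTmem i).1 hiT)
          ((hTmem j).1 hjT) (Ne.symm hir1) (Ne.symm hjr1) hne2
          (if 0 ≤ Dm hmn A ⟨n-2, hnm2⟩ i then (1:ℤ) else -1)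
          (if 0 ≤ Dm hmn A ⟨n-2, hnm2⟩ j then (1:ℤ) else -1)
          (by split_ifs <;> simp) (by split_ifs <;> simp) ?_ hij
        rw [hsign, hsign, hib, hjb]
    have hT'img : (T'.image (fun r => |Dm hmn A r1 r|)).card ≤ d := by
      refine himg _ _ (fun r hr => ?_)
      obtain ⟨hrT, hrne, _⟩ := hT'facts r hr
      exact hmem r1 r (by have := (hTmem r1).1 hr1T.1; omega)
        (by have := (hTmem r).1 hrT; omega) (Ne.symm hrne)
    have := Finset.card_le_mul_card_image (f := fun r => |Dm hmn A r1 r|) T' 2 hfib2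
    have h2 : T'.card ≤ 2 * d := le_trans this (by
      exact Nat.mul_le_mul_left 2 hT'img)
    omega
  -- conclude
  have himg1 : (T.image (fun r => |Dm hmn A ⟨n-2, hnm2⟩ r|)).card ≤ d := by
    refine himg _ _ (fun r hr => ?_)
    refine hmem _ r (by simp) (by have := (hTmem r).1 hr; omega) ?_
    exact Fin.ne_of_val_ne (by simp; have := (hTmem r).1 hr; omega)
  have hc1 := Finset.card_le_mul_card_image
    (f := fun r => |Dm hmn A ⟨n-2, hnm2⟩ r|) T (2 * d + 1) hfiber
  have hc2 : T.card ≤ (2 * d + 1) * d :=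
    le_trans hc1 (Nat.mul_le_mul_left (2 * d + 1) himg1)
  have : (2 * d + 1) * d = d * (2 * d + 1) := Nat.mul_comm _ _
  omega
end

section
/- Let A ∈ ℤ^{m×n} with m ≥ n and rank(A) = n, and let γ be the greatest common divisor of the elements of D(A) (which contains a nonzero element since rank(A) = n). Then there exists an integer matrix A' ∈ ℤ^{m×n} such that D(A') = {k/γ : k ∈ D(A)}; moreover, A' can be taken of the form A' = A·Q·S^{−1}, where Q ∈ ℤ^{n×n} is unimodular and S ∈ ℤ^{n×n} is a diagonal matrix with positive diagonal entries whose product equals γ, such that A·Q·S^{−1} is integral. -/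
open Matrix Finset

lemma det_mul_expand {n m : ℕ} (X : Matrix (Fin n) (Fin m) ℤ) (Y : Matrix (Fin m) (Fin n) ℤ) :
    (X * Y).det = ∑ p : Fin n → Fin m, (X.submatrix id p).det * ∏ i, Y (p i) i := by
  calc (X * Y).det
      = ∑ p : Fin n → Fin m, ∑ σ : Equiv.Perm (Fin n),
          Equiv.Perm.sign σ * ∏ i, X (σ i) (p i) * Y (p i) i := by
        simp only [det_apply', mul_apply, prod_univ_sum, mul_sum, Fintype.piFinset_univ,
          Int.cast_id]
        rw [Finset.sum_comm]
    _ = ∑ p : Fin n → Fin m, (X.submatrix id p).det * ∏ i, Y (p i) i := by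
        refine Finset.sum_congr rfl fun p _ => ?_
        rw [det_apply', Finset.sum_mul]
        simp only [Int.cast_id]
        refine Finset.sum_congr rfl fun σ _ => ?_
        simp only [submatrix_apply, id_eq, Finset.prod_mul_distrib]
        ring

/-- Row version: minors of the right factor. -/
lemma det_mul_expand' {n m : ℕ} (B : Matrix (Fin n) (Fin m) ℤ) (C : Matrix (Fin m) (Fin n) ℤ) :
    (B * C).det = ∑ p : Fin n → Fin m, (C.submatrix p id).det * ∏ i, B i (p i) := by
  rw [← Matrix.det_transpose (B * C), Matrix.transpose_mul, det_mul_expand]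
  refine Finset.sum_congr rfl fun p _ => ?_
  rw [show (Cᵀ).submatrix id p = (C.submatrix p id)ᵀ from rfl, Matrix.det_transpose]
  rfl



/-- Dividing out the gcd `γ` of `D(A)`: there are a unimodular `Q` and a positive diagonal
matrix `S` with `∏ diag = γ` such that `A' := A·Q·S⁻¹` is integral (i.e. `A'·S = A·Q`)
and `D(A') = {k/γ : k ∈ D(A)}`. -/
theorem stmt2 (m n : ℕ) (hmn : n ≤ m) (A : Matrix (Fin m) (Fin n) ℤ)
    (hrank : A.rank = n) (γ : ℤ) (hγ : 0 < γ)
    (hdvd : ∀ k ∈ detSet A, γ ∣ k)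
    (hgcd : ∀ c : ℤ, (∀ k ∈ detSet A, c ∣ k) → c ∣ γ) :
    ∃ (A' : Matrix (Fin m) (Fin n) ℤ) (Q : Matrix (Fin n) (Fin n) ℤ) (dg : Fin n → ℤ),
      (Q.det = 1 ∨ Q.det = -1) ∧ (∀ i, 0 < dg i) ∧ (∏ i, dg i) = γ ∧
      A' * Matrix.diagonal dg = A * Q ∧
      detSet A' = (fun k => k / γ) '' detSet A := by
  classical
  set φ := A.mulVecLin with hφ
  set N := LinearMap.range φ with hNdef
  obtain ⟨r, bM, bN, f, a, hsnf⟩ := N.smithNormalForm (Pi.basisFun ℤ (Fin m))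
  have hr : r = n := by
    have h1 : Module.finrank ℤ N = r := by
      rw [Module.finrank_eq_card_basis bN, Fintype.card_fin]
    have h2 : Module.finrank ℤ N = n := by rw [← hrank]; rfl
    omega
  subst hr
  -- nonzero diagonal entries
  have ha : ∀ i, a i ≠ 0 := by
    intro i h
    have h2 := hsnf i
    rw [h, zero_smul] at h2
    exact bN.ne_zero i (by exact_mod_cast Subtype.ext h2)
  choose q hq using fun j => LinearMap.mem_range.mp (bN j).2
  set Q : Matrix (Fin r) (Fin r) ℤ := Matrix.of fun i j => q j i with hQdef
  set ε : Fin r → ℤ := fun j => if 0 ≤ a j then 1 else -1 with hε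
  set dg : Fin r → ℤ := fun j => |a j| with hdg
  set A' : Matrix (Fin m) (Fin r) ℤ := Matrix.of fun i j => ε j * bM (f j) i with hA'
  have hεa : ∀ j, ε j * |a j| = a j := by
    intro j
    by_cases h : 0 ≤ a j
    · simp [hε, h, abs_of_nonneg h]
    · simp [hε, h, abs_of_neg (lt_of_not_ge h)]
  have hAQcol : ∀ i j, (A * Q) i j = a j * bM (f j) i := by
    intro i j
    have h1 : (A * Q) i j = φ (q j) i := by
      simp [hφ, Matrix.mul_apply, Matrix.mulVecLin_apply, Matrix.mulVec, dotProduct, hQdef]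
    rw [h1, hq j, hsnf j]
    simp
  have hAQ : A' * Matrix.diagonal dg = A * Q := by
    ext i j
    rw [Matrix.mul_diagonal, hAQcol]
    show ε j * bM (f j) i * |a j| = a j * bM (f j) i
    linear_combination bM (f j) i * hεa j
  -- ψ and injectivity
  set LQ := Matrix.toLin' Q with hLQ
  set ψ := φ.rangeRestrict with hψ
  have hψsurj : Function.Surjective ψ := LinearMap.surjective_rangeRestrict φ
  have hψinj : Function.Injective ψ := by
    have hE : Function.Surjective (bN.equivFun.toLinearMap ∘ₗ ψ) := by
      rw [LinearMap.coe_comp]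
      exact bN.equivFun.surjective.comp hψsurj
    have hI := OrzechProperty.injective_of_surjective_endomorphism _ hE
    intro x y hxy
    exact hI (by simp [LinearMap.comp_apply, hxy])
  have hχ : ∀ j, ψ (LQ (Pi.single j 1)) = bN j := by
    intro j
    have h1 : LQ (Pi.single j 1) = q j := by
      ext i
      simp [hLQ, Matrix.toLin'_apply, Matrix.mulVec, dotProduct, Pi.single_apply, hQdef]
    rw [h1]
    apply Subtype.ext
    simpa [hψ] using hq j
  have hχeq : ψ ∘ₗ LQ = (bN.equivFun.symm : (Fin r → ℤ) ≃ₗ[ℤ] N).toLinearMap := by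
    apply Module.Basis.ext (Pi.basisFun ℤ (Fin r))
    intro j
    rw [Pi.basisFun_apply, LinearMap.comp_apply, hχ j]
    rw [LinearEquiv.coe_toLinearMap, Module.Basis.equivFun_symm_apply]
    simp [Pi.single_apply, ite_smul, Finset.sum_ite_eq']
  have hχbij : Function.Bijective (ψ ∘ₗ LQ) := by
    rw [hχeq]
    exact bN.equivFun.symm.bijective
  have hLQinj : Function.Injective LQ := by
    intro x y h
    apply hχbij.injective
    simp only [LinearMap.comp_apply, h]
  have hLQsurj : Function.Surjective LQ := by
    intro y
    obtain ⟨x, hx⟩ := hχbij.surjective (ψ y)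
    exact ⟨x, hψinj (by simpa [LinearMap.comp_apply] using hx)⟩
  have hQQ' : ∃ Q' : Matrix (Fin r) (Fin r) ℤ, Q * Q' = 1 := by
    set e := LinearEquiv.ofBijective LQ ⟨hLQinj, hLQsurj⟩ with he
    refine ⟨LinearMap.toMatrix' (e.symm : (Fin r → ℤ) →ₗ[ℤ] (Fin r → ℤ)), ?_⟩
    apply Matrix.toLin'.injective
    rw [Matrix.toLin'_mul, Matrix.toLin'_one, Matrix.toLin'_toMatrix']
    refine LinearMap.ext fun x => ?_
    have : LQ ((e.symm : (Fin r → ℤ) →ₗ[ℤ] (Fin r → ℤ)) x) = e (e.symm x) := rfl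
    rw [LinearMap.comp_apply]
    rw [← hLQ, this, e.apply_symm_apply]
    rfl
  obtain ⟨Q', hQQ'⟩ := hQQ'
  have hdetQ : Q.det = 1 ∨ Q.det = -1 :=
    Int.isUnit_iff.mp (Matrix.isUnit_det_of_right_inverse hQQ')
  -- minors identity
  set γ' := ∏ i, dg i with hγ'def
  have hγ'pos : 0 < γ' := Finset.prod_pos fun i _ => abs_pos.mpr (ha i)
  have hsubmul : ∀ (g : Fin r → Fin m) (M : Matrix (Fin m) (Fin r) ℤ)
      (P : Matrix (Fin r) (Fin r) ℤ), (M * P).submatrix g id = M.submatrix g id * P := by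
    intro g M P; ext i j; simp [Matrix.mul_apply]
  have hminor : ∀ g : Fin r → Fin m,
      (A.submatrix g id).det * Q.det = (A'.submatrix g id).det * γ' := by
    intro g
    have h1 : ((A * Q).submatrix g id).det = (A.submatrix g id).det * Q.det := by
      rw [hsubmul, det_mul]
    have h2 : ((A' * Matrix.diagonal dg).submatrix g id).det
        = (A'.submatrix g id).det * γ' := by
      rw [hsubmul, det_mul, det_diagonal]
    rw [← h1, ← hAQ, h2]
  have hγ'dvd : ∀ k ∈ detSet A, γ' ∣ k := by
    rintro k ⟨g, hg, rfl⟩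
    rw [dvd_abs]
    have h2 := hminor g
    rcases hdetQ with h | h
    · rw [h, mul_one] at h2
      exact h2 ▸ dvd_mul_left γ' _
    · rw [h, mul_neg_one] at h2
      have h3 : (A.submatrix g id).det = -((A'.submatrix g id).det * γ') := by linarith
      rw [h3, dvd_neg]
      exact dvd_mul_left γ' _
  have hγ'γ : γ' ∣ γ := hgcd γ' hγ'dvd
  -- the left inverse B of A'
  set B : Matrix (Fin r) (Fin m) ℤ := Matrix.of fun j k => bM.repr (Pi.single k 1) (f j) with hB
  have hv : ∀ v : Fin m → ℤ, ∑ k, v k • Pi.single k (1:ℤ) = v := by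
    intro v
    ext i
    simp [Finset.sum_apply, Pi.single_apply]
  have hBA' : B * A' = Matrix.diagonal ε := by
    ext j j'
    rw [Matrix.mul_apply]
    have key : ∑ k, bM (f j') k * (bM.coord (f j)) (Pi.single k 1)
        = if j = j' then 1 else 0 := by
      have h1 : ∑ k, bM (f j') k * (bM.coord (f j)) (Pi.single k 1)
          = (bM.coord (f j)) (∑ k, bM (f j') k • Pi.single k (1:ℤ)) := by
        rw [map_sum]
        refine Finset.sum_congr rfl fun k _ => ?_
        rw [_root_.map_smul, smul_eq_mul]
      rw [h1, hv, Module.Basis.coord_apply, Module.Basis.repr_self, Finsupp.single_apply]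
      simp only [f.injective.eq_iff]
      rcases eq_or_ne j j' with h | h
      · simp [h]
      · simp [h, h.symm]
    calc ∑ k, B j k * A' k j' = ε j' * ∑ k, bM (f j') k * (bM.coord (f j)) (Pi.single k 1) := by
          rw [Finset.mul_sum]
          refine Finset.sum_congr rfl fun k _ => ?_
          simp [hB, hA', Module.Basis.coord_apply]
          ring
      _ = Matrix.diagonal ε j j' := by
          rw [key, Matrix.diagonal_apply]
          by_cases h : j = j' <;> simp [h]
  have hγγ' : γ ∣ γ' := by
    have hdetBA' : (B * A').det = ∏ j, ε j := by rw [hBA', det_diagonal]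
    have hu : (∏ j, ε j) * (∏ j, ε j) = 1 := by
      rw [← Finset.prod_mul_distrib]
      apply Finset.prod_eq_one
      intro j _
      by_cases h : 0 ≤ a j <;> simp [hε, h]
    have hterm : ∀ p : Fin r → Fin m, γ ∣ γ' * (A'.submatrix p id).det := by
      intro p
      by_cases hp : Function.Injective p
      · have h1 : γ ∣ (A.submatrix p id).det :=
          (dvd_abs γ _).mp (hdvd _ ⟨p, hp, rfl⟩)
        have h2 := hminor p
        have h3 : γ ∣ (A'.submatrix p id).det * γ' := h2 ▸ h1.mul_right Q.det
        rwa [mul_comm] at h3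
      · obtain ⟨i, j, hij, hpij⟩ : ∃ i j, p i = p j ∧ i ≠ j := by
          simpa [Function.Injective] using hp
        have h0 : (A'.submatrix p id).det = 0 :=
          Matrix.det_zero_of_row_eq hpij (by ext k; simp [hij])
        simp [h0]
    have hsum : γ ∣ γ' * (B * A').det := by
      rw [det_mul_expand' B A', Finset.mul_sum]
      refine Finset.dvd_sum fun p _ => ?_
      rw [← mul_assoc]
      exact (hterm p).mul_right _
    rw [hdetBA'] at hsum
    have h3 : γ ∣ γ' * (∏ j, ε j) * (∏ j, ε j) := hsum.mul_right _
    rwa [mul_assoc, hu, mul_one] at h3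
  have hγeq : γ' = γ := Int.dvd_antisymm (le_of_lt hγ'pos) (le_of_lt hγ) hγ'γ hγγ'
  have habs : ∀ g : Fin r → Fin m,
      |(A.submatrix g id).det| = γ * |(A'.submatrix g id).det| := by
    intro g
    have h2 := hminor g
    have h3 : |(A.submatrix g id).det| * |Q.det| = |(A'.submatrix g id).det| * |γ'| := by
      rw [← abs_mul, ← abs_mul, h2]
    have h4 : |Q.det| = 1 := by rcases hdetQ with h | h <;> simp [h]
    have h5 : |γ'| = γ := by rw [abs_of_pos hγ'pos, hγeq]
    rw [h4, h5, mul_one] at h3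
    linarith
  refine ⟨A', Q, dg, hdetQ, fun i => abs_pos.mpr (ha i), hγeq, hAQ, ?_⟩
  ext d
  simp only [Set.mem_image]
  constructor
  · rintro ⟨g, hg, rfl⟩
    refine ⟨|(A.submatrix g id).det|, ⟨g, hg, rfl⟩, ?_⟩
    rw [habs g, Int.mul_ediv_cancel_left _ (ne_of_gt hγ)]
  · rintro ⟨k, ⟨g, hg, rfl⟩, rfl⟩
    refine ⟨g, hg, ?_⟩
    rw [habs g, Int.mul_ediv_cancel_left _ (ne_of_gt hγ)]
end

section
/- Let a > b > 0 be integers with 2·b ≠ a. Let A ∈ ℤ^{m×n} with m ≥ n have the block form A = [L 0 u; 0 R w], where L ∈ ℤ^{m₁×n₁} and R ∈ ℤ^{m₂×n₂} have all entries in {0, 1, −1}, n₁ + n₂ = n − 1, m₁ + m₂ = m, u ∈ {0,a}^{m₁} has at least one nonzero entry, w ∈ {0,b}^{m₂} has at least one nonzero entry, and the rows of A include the unit vectors e₁, …, e_{n−1} ∈ ℤ^n. If D(A) ⊆ {a, b, 0}, then L and R are totally unimodular. -/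
lemma pivot_det (s : ℕ) (M : Matrix (Fin (s+1)) (Fin (s+1)) ℤ) :
    M 0 0 * (Matrix.of fun i j : Fin s =>
        M 0 0 * M i.succ j.succ - M i.succ 0 * M 0 j.succ).det
      = (M 0 0) ^ s * M.det := by
  set N : Matrix (Fin (s+1)) (Fin (s+1)) ℤ := Matrix.of (fun i j =>
    if i = 0 then M i j else M 0 0 * M i j - M i 0 * M 0 j) with hN
  set E : Matrix (Fin (s+1)) (Fin (s+1)) ℤ := Matrix.of (fun i j =>
    if i = 0 then (if j = 0 then 1 else 0)
    else if j = i then M 0 0 else if j = 0 then - M i 0 else 0) with hE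
  have hNE : N = E * M := by
    ext i j
    rcases eq_or_ne i 0 with h | h
    · subst h
      simp [hN, hE, Matrix.mul_apply]
    · have step : ∀ l, E i l * M l j
          = (if l = i then M 0 0 * M i j else 0) + (if l = 0 then - M i 0 * M 0 j else 0) := by
        intro l
        rcases eq_or_ne l i with rfl | hl
        · simp [hE, h, if_neg h]
        · rcases eq_or_ne l 0 with rfl | hl0
          · simp [hE, Ne.symm h, hl, h]
          · simp [hE, hl0, hl]
      simp only [Matrix.mul_apply, step, Finset.sum_add_distrib, Finset.sum_ite_eq',
        Finset.mem_univ, if_true]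
      simp [hN, h]
      ring
  have hdetE : E.det = (M 0 0) ^ s := by
    have htri : E.BlockTriangular OrderDual.toDual := by
      intro i j hij
      have hij' : i < j := hij
      have hi0 : j ≠ 0 := by
        intro hj
        subst hj
        exact Fin.not_lt_zero i hij'
      rcases eq_or_ne i 0 with rfl | hi
      · simp [hE, hi0]
      · simp [hE, hi, hi0, (ne_of_lt hij').symm]
    rw [Matrix.det_of_lowerTriangular E htri]
    rw [Fin.prod_univ_succ]
    simp [hE, Fin.succ_ne_zero]
  have hdetN : N.det = (M 0 0) ^ s * M.det := by rw [hNE, Matrix.det_mul, hdetE]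
  have hcol : N.det = M 0 0 * (Matrix.of fun i j : Fin s =>
      M 0 0 * M i.succ j.succ - M i.succ 0 * M 0 j.succ).det := by
    rw [Matrix.det_succ_column_zero]
    rw [Finset.sum_eq_single 0]
    · have h00 : N 0 0 = M 0 0 := by simp [hN]
      have hsub : N.submatrix (Fin.succAbove 0) Fin.succ
          = Matrix.of fun i j : Fin s => M 0 0 * M i.succ j.succ - M i.succ 0 * M 0 j.succ := by
        ext i j
        simp [hN, Fin.succAbove_zero, Fin.succ_ne_zero]
      rw [hsub, h00]
      simp
    · intro i _ hi
      have : N i 0 = 0 := by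
        simp [hN, hi]
        ring
      simp [this]
    · simp
  rw [← hcol, hdetN]

lemma cons_inj {s k : ℕ} (f : Fin s → Fin k) (hf : Function.Injective f) :
    Function.Injective (Fin.cons 0 (Fin.succ ∘ f) : Fin (s+1) → Fin (k+1)) := by
  intro x y hxy
  induction x using Fin.cases with
  | zero =>
    induction y using Fin.cases with
    | zero => rfl
    | succ y =>
      simp only [Fin.cons_zero, Fin.cons_succ, Function.comp_apply] at hxy
      exact absurd hxy.symm (Fin.succ_ne_zero _)
  | succ x =>
    induction y using Fin.cases with
    | zero =>
      simp only [Fin.cons_zero, Fin.cons_succ, Function.comp_apply] at hxy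
      exact absurd hxy (Fin.succ_ne_zero _)
    | succ y =>
      simp only [Fin.cons_succ, Function.comp_apply] at hxy
      exact congrArg Fin.succ (hf (Fin.succ_injective _ hxy))

lemma camion : ∀ k (B : Matrix (Fin k) (Fin k) ℤ),
    (∀ i j, B i j = 0 ∨ B i j = 1 ∨ B i j = -1) →
    (∀ s, s < k → ∀ f g : Fin s → Fin k, Function.Injective f → Function.Injective g →
      |(B.submatrix f g).det| ≤ 1) →
    |B.det| ≤ 2 := by
  intro k
  induction k using Nat.strong_induction_on with
  | _ k IH =>
  intro B hent hprop
  match k, B, IH, hent, hprop with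
  | 0, B, IH, hent, hprop => simp [Matrix.det_isEmpty]
  | 1, B, IH, hent, hprop =>
    rw [Matrix.det_fin_one]
    rcases hent 0 0 with h | h | h <;> simp [h]
  | 2, B, IH, hent, hprop =>
    rw [Matrix.det_fin_two]
    rcases hent 0 0 with h | h | h <;> rcases hent 0 1 with h1 | h1 | h1 <;>
      rcases hent 1 0 with h2 | h2 | h2 <;> rcases hent 1 1 with h3 | h3 | h3 <;>
      rw [h, h1, h2, h3] <;> norm_num
  | (s+3), B, IH, hent, hprop =>
    by_cases hz : B.det = 0
    · rw [hz]; norm_num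
    -- find a nonzero entry
    have hpq : ∃ p q, B p q ≠ 0 := by
      by_contra h
      push_neg at h
      apply hz
      have : B = 0 := by ext i j; exact h i j
      rw [this]
      simp [Matrix.det_zero]
    obtain ⟨p, q, hpq⟩ := hpq
    set C : Matrix (Fin (s+3)) (Fin (s+3)) ℤ :=
      B.submatrix (Equiv.swap 0 p) (Equiv.swap 0 q) with hC
    have hC00 : C 0 0 = B p q := by simp [hC]
    have hCabs : |C.det| = |B.det| := Matrix.abs_det_submatrix_equiv_equiv _ _ _
    have hCent : ∀ i j, C i j = 0 ∨ C i j = 1 ∨ C i j = -1 := fun i j => hent _ _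
    have hCprop : ∀ s', s' < s+3 → ∀ f g : Fin s' → Fin (s+3),
        Function.Injective f → Function.Injective g → |(C.submatrix f g).det| ≤ 1 := by
      intro s' hs' f g hf hg
      have : C.submatrix f g = B.submatrix ((Equiv.swap 0 p) ∘ f) ((Equiv.swap 0 q) ∘ g) := rfl
      rw [this]
      exact hprop s' hs' _ _ ((Equiv.swap 0 p).injective.comp hf)
        ((Equiv.swap 0 q).injective.comp hg)
    have hε : C 0 0 = 1 ∨ C 0 0 = -1 := by
      rcases hCent 0 0 with h | h | h
      · rw [hC00] at h; exact absurd h hpq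
      · exact Or.inl h
      · exact Or.inr h
    have hεabs : |C 0 0| = 1 := by rcases hε with h | h <;> rw [h] <;> norm_num
    set B' : Matrix (Fin (s+2)) (Fin (s+2)) ℤ := Matrix.of (fun i j =>
      C 0 0 * C i.succ j.succ - C i.succ 0 * C 0 j.succ) with hB'
    -- key: subdeterminants of B' are determinants of submatrices of C one size bigger
    have key : ∀ (s' : ℕ) (f g : Fin s' → Fin (s+2)), Function.Injective f →
        Function.Injective g →
        |(B'.submatrix f g).det| =
          |(C.submatrix (Fin.cons 0 (Fin.succ ∘ f)) (Fin.cons 0 (Fin.succ ∘ g))).det| := by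
      intro s' f g hf hg
      set M := C.submatrix (Fin.cons 0 (Fin.succ ∘ f)) (Fin.cons 0 (Fin.succ ∘ g)) with hM
      have hM00 : M 0 0 = C 0 0 := by simp [hM]
      have hpiv := pivot_det s' M
      have heq : (Matrix.of fun i j : Fin s' =>
          M 0 0 * M i.succ j.succ - M i.succ 0 * M 0 j.succ) = B'.submatrix f g := by
        ext i j
        simp [hM, hB', Fin.cons_succ, Fin.cons_zero]
      rw [heq, hM00] at hpiv
      have := congrArg abs hpiv
      rw [abs_mul, abs_mul, abs_pow, hεabs, one_pow, one_mul, one_mul] at this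
      exact this
    have hB'ent : ∀ i j, B' i j = 0 ∨ B' i j = 1 ∨ B' i j = -1 := by
      intro i j
      have h2 := key 1 (fun _ => i) (fun _ => j)
        (Function.injective_of_subsingleton _) (Function.injective_of_subsingleton _)
      have hd1 : (B'.submatrix (fun _ : Fin 1 => i) (fun _ : Fin 1 => j)).det = B' i j := by
        rw [Matrix.det_fin_one]; rfl
      rw [hd1] at h2
      have hle : |(C.submatrix (Fin.cons 0 (Fin.succ ∘ fun _ : Fin 1 => i))
          (Fin.cons 0 (Fin.succ ∘ fun _ : Fin 1 => j))).det| ≤ 1 := by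
        apply hCprop 2 (by omega)
        · exact cons_inj _ (Function.injective_of_subsingleton _)
        · exact cons_inj _ (Function.injective_of_subsingleton _)
      rw [← h2] at hle
      rcases abs_le.mp hle with ⟨h1, h2'⟩
      omega
    have hB'prop : ∀ s', s' < s+2 → ∀ f g : Fin s' → Fin (s+2), Function.Injective f →
        Function.Injective g → |(B'.submatrix f g).det| ≤ 1 := by
      intro s' hs' f g hf hg
      rw [key s' f g hf hg]
      exact hCprop (s'+1) (by omega) _ _ (cons_inj f hf) (cons_inj g hg)
    have hIH := IH (s+2) (by omega) B' hB'ent hB'prop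
    -- |det B'| = |det C|
    have hfull : |B'.det| = |C.det| := by
      have h2 := key (s+2) id id Function.injective_id Function.injective_id
      have hsid : B'.submatrix id id = B' := by ext i j; rfl
      rw [hsid] at h2
      have hcons : (Fin.cons 0 (Fin.succ ∘ (id : Fin (s+2) → Fin (s+2))) :
          Fin (s+3) → Fin (s+3)) = id := by
        funext x
        induction x using Fin.cases <;> simp
      rw [hcons] at h2
      have : C.submatrix id id = C := by ext i j; rfl
      rw [this] at h2
      exact h2
    rw [← hCabs, ← hfull]
    exact hIH

lemma construct_mem (a b : ℤ) (m₁ m₂ n₁ n₂ : ℕ)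
    (A : Matrix (Fin (m₁+m₂)) (Fin (n₁+n₂+1)) ℤ)
    (hunits : ∀ k : ℕ, k < n₁ + n₂ → ∃ i, ∀ j, A i j = if (j:ℕ) = k then 1 else 0)
    (hsub : detSet A ⊆ {a,b,0})
    (k : ℕ) (f : Fin k → Fin (m₁+m₂)) (g : Fin k → Fin (n₁+n₂+1))
    (hfinj : Function.Injective f) (hginj : Function.Injective g)
    (hg : ∀ i, (g i : ℕ) < n₁ + n₂)
    (i0 : Fin (m₁+m₂)) (hv : A i0 (Fin.last (n₁+n₂)) ≠ 0)
    (hi0g : ∀ l, A i0 (g l) = 0) (hi0f : ∀ l, f l ≠ i0) :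
    |A i0 (Fin.last (n₁+n₂))| * |(A.submatrix f g).det| ∈ ({a, b, 0} : Set ℤ) := by
  by_cases hdet : (A.submatrix f g).det = 0
  · rw [hdet]; simp
  have hrow : ∀ i, ∃ l, A (f i) (g l) ≠ 0 := by
    intro i
    by_contra h
    push_neg at h
    exact hdet (Matrix.det_eq_zero_of_row_eq_zero i (fun l => h l))
  have hglast : ∀ i, g i ≠ Fin.last (n₁+n₂) := by
    intro i h
    have h2 := hg i
    rw [h, Fin.val_last] at h2
    omega
  have hkn : k ≤ n₁ + n₂ := by
    have hinj : Function.Injective (fun i : Fin k => (⟨(g i : ℕ), hg i⟩ : Fin (n₁+n₂))) := by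
      intro x y hxy
      have h2 : ((⟨(g x : ℕ), hg x⟩ : Fin (n₁+n₂)) : ℕ) = ((⟨(g y : ℕ), hg y⟩ : Fin (n₁+n₂)) : ℕ) :=
        congrArg Fin.val hxy
      exact hginj (Fin.ext h2)
    simpa using Fintype.card_le_of_injective _ hinj
  set T : Finset (Fin (n₁+n₂+1)) :=
    (insert (Fin.last (n₁+n₂)) (Finset.image g Finset.univ))ᶜ with hT
  have hlast_nmem : Fin.last (n₁+n₂) ∉ Finset.image g Finset.univ := by
    simp only [Finset.mem_image]
    rintro ⟨i, -, h⟩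
    exact hglast i h
  have hTcard : T.card = n₁ + n₂ - k := by
    rw [hT, Finset.card_compl, Finset.card_insert_of_notMem hlast_nmem,
      Finset.card_image_of_injective _ hginj]
    simp
  set r := n₁ + n₂ - k with hr
  set c : Fin r → Fin (n₁+n₂+1) := fun j => ((T.orderIsoOfFin hTcard) j : Fin (n₁+n₂+1)) with hc
  have hcT : ∀ j, c j ∈ T := fun j => (T.orderIsoOfFin hTcard j).2
  have hcinj : Function.Injective c := fun x y hxy =>
    (T.orderIsoOfFin hTcard).injective (Subtype.ext hxy)
  have hcnmem : ∀ j, c j ∉ insert (Fin.last (n₁+n₂)) (Finset.image g Finset.univ) := by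
    intro j
    have := hcT j
    rwa [hT, Finset.mem_compl] at this
  have hcg : ∀ j l, c j ≠ g l := by
    intro j l h
    exact hcnmem j (Finset.mem_insert_of_mem (Finset.mem_image.mpr ⟨l, Finset.mem_univ l, h.symm⟩))
  have hclast : ∀ j, c j ≠ Fin.last (n₁+n₂) := by
    intro j h
    exact hcnmem j (h ▸ Finset.mem_insert_self _ _)
  have hclt : ∀ j, (c j : ℕ) < n₁ + n₂ := by
    intro j
    have h1 : (c j : ℕ) < n₁+n₂+1 := (c j).isLt
    have h2 : (c j : ℕ) ≠ n₁+n₂ := by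
      intro h
      exact hclast j (Fin.ext (by rw [h, Fin.val_last]))
    omega
  set γ : (Fin k ⊕ Fin 1) ⊕ Fin r → Fin (n₁+n₂+1) :=
    Sum.elim (Sum.elim g (fun _ => Fin.last (n₁+n₂))) c with hγ
  have hγinj : Function.Injective γ := by
    rintro ((x | x) | x) ((y | y) | y) h <;> simp only [hγ, Sum.elim_inl, Sum.elim_inr] at h
    · rw [hginj h]
    · exact absurd h (hglast x)
    · exact absurd h.symm (hcg y x)
    · exact absurd h.symm (hglast y)
    · rw [Subsingleton.elim x y]
    · exact absurd h.symm (hclast y)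
    · exact absurd h (hcg x y)
    · exact absurd h (hclast x)
    · rw [hcinj h]
  have hγbij : Function.Bijective γ := by
    rw [Fintype.bijective_iff_injective_and_card]
    refine ⟨hγinj, ?_⟩
    simp only [Fintype.card_sum, Fintype.card_fin]
    omega
  set eγ : ((Fin k ⊕ Fin 1) ⊕ Fin r) ≃ Fin (n₁+n₂+1) := Equiv.ofBijective γ hγbij with heγ
  have hν : ∀ j : Fin r, ∃ i, ∀ col, A i col = if (col:ℕ) = ((c j : Fin (n₁+n₂+1)) : ℕ) then 1 else 0 :=
    fun j => hunits (c j) (hclt j)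
  set ν : Fin r → Fin (m₁+m₂) := fun j => (hν j).choose with hνdef
  have hνspec : ∀ j col, A (ν j) col = if (col:ℕ) = ((c j : Fin (n₁+n₂+1)) : ℕ) then 1 else 0 :=
    fun j => (hν j).choose_spec
  set ρ : (Fin k ⊕ Fin 1) ⊕ Fin r → Fin (m₁+m₂) :=
    Sum.elim (Sum.elim f (fun _ => i0)) ν with hρ
  have hfν : ∀ x j, f x ≠ ν j := by
    intro x j h
    obtain ⟨l, hl⟩ := hrow x
    apply hl
    rw [h, hνspec j (g l), if_neg]
    intro hval
    exact hcg j l (Fin.ext hval).symm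
  have hi0ν : ∀ j, i0 ≠ ν j := by
    intro j h
    apply hv
    rw [h, hνspec j (Fin.last (n₁+n₂)), if_neg]
    intro hval
    exact hclast j (Fin.ext hval.symm)
  have hνinj : Function.Injective ν := by
    intro x y h
    by_contra hxy
    have h1 : A (ν x) (c x) = 1 := by rw [hνspec x (c x), if_pos rfl]
    have h2 : A (ν y) (c x) = 0 := by
      rw [hνspec y (c x), if_neg]
      intro hval
      exact hxy (hcinj (Fin.ext hval))
    rw [h] at h1
    rw [h1] at h2
    exact one_ne_zero h2
  have hρinj : Function.Injective ρ := by
    rintro ((x | x) | x) ((y | y) | y) h <;> simp only [hρ, Sum.elim_inl, Sum.elim_inr] at h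
    · rw [hfinj h]
    · exact absurd h (hi0f x)
    · exact absurd h (hfν x y)
    · exact absurd h.symm (hi0f y)
    · rw [Subsingleton.elim x y]
    · exact absurd h (hi0ν y)
    · exact absurd h.symm (hfν y x)
    · exact absurd h.symm (hi0ν x)
    · rw [hνinj h]
  set F : Fin (n₁+n₂+1) → Fin (m₁+m₂) := ρ ∘ eγ.symm with hF
  have hFinj : Function.Injective F := hρinj.comp eγ.symm.injective
  have hmem : |(A.submatrix F id).det| ∈ detSet A := ⟨F, hFinj, rfl⟩
  have hsubmem := hsub hmem
  have hre : (A.submatrix F id).submatrix eγ eγ = A.submatrix ρ γ := by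
    rw [Matrix.submatrix_submatrix]
    have h1 : F ∘ ⇑eγ = ρ := by
      funext i
      show ρ (eγ.symm (eγ i)) = ρ i
      rw [eγ.symm_apply_apply]
    have h2 : (id ∘ ⇑eγ) = γ := by funext i; rfl
    rw [h1, h2]
  have hdet1 : (A.submatrix ρ γ).det = (A.submatrix F id).det := by
    rw [← hre]
    exact Matrix.det_submatrix_equiv_self eγ _
  set N := A.submatrix ρ γ with hNdef
  have h21 : N.toBlocks₂₁ = 0 := by
    ext j x
    show N (Sum.inr j) (Sum.inl x) = 0
    show A (ν j) (γ (Sum.inl x)) = 0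
    rw [hνspec j, if_neg]
    intro hval
    have heq : γ (Sum.inl x) = c j := Fin.ext hval
    rcases x with x | x
    · exact hcg j x heq.symm
    · exact hclast j heq.symm
  have h22 : N.toBlocks₂₂ = 1 := by
    ext j j'
    show N (Sum.inr j) (Sum.inr j') = _
    show A (ν j) (c j') = _
    rw [hνspec j (c j'), Matrix.one_apply]
    by_cases hjj : j = j'
    · subst hjj
      rw [if_pos rfl, if_pos rfl]
    · rw [if_neg, if_neg hjj]
      intro hval
      exact hjj (hcinj (Fin.ext hval)).symm
  have hdetN : N.det = N.toBlocks₁₁.det := by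
    conv_lhs => rw [← Matrix.fromBlocks_toBlocks N]
    rw [h21, h22, Matrix.det_fromBlocks_zero₂₁, Matrix.det_one, mul_one]
  set P := N.toBlocks₁₁ with hP
  have hp21 : P.toBlocks₂₁ = 0 := by
    ext x y
    show P (Sum.inr x) (Sum.inl y) = 0
    show A i0 (g y) = 0
    exact hi0g y
  have hp11 : P.toBlocks₁₁ = A.submatrix f g := by
    ext x y
    rfl
  have hdetP : P.det = (A.submatrix f g).det * A i0 (Fin.last (n₁+n₂)) := by
    conv_lhs => rw [← Matrix.fromBlocks_toBlocks P]
    rw [hp21, Matrix.det_fromBlocks_zero₂₁, hp11]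
    congr 1
    rw [Matrix.det_fin_one]
    rfl
  have hfinal : |(A.submatrix F id).det|
      = |A i0 (Fin.last (n₁+n₂))| * |(A.submatrix f g).det| := by
    rw [← hdet1, hdetN, hdetP, abs_mul, mul_comm]
  rw [← hfinal]
  exact hsubmem

/-- If `A = [L 0 u; 0 R w]` (`a > b > 0`, `2b ≠ a`) with `L,R` having `{0,±1}` entries,
`u ∈ {0,a}^{m₁}` and `w ∈ {0,b}^{m₂}` each with a nonzero entry, the rows containing the
first `n-1` unit vectors, and `D(A) ⊆ {a,b,0}`, then `L` and `R` are totally unimodular. -/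
theorem stmt5 (a b : ℤ) (m₁ m₂ n₁ n₂ : ℕ) (hab : a > b) (hb : 0 < b) (hdup : 2 * b ≠ a)
    (hmn : n₁ + n₂ + 1 ≤ m₁ + m₂)
    (A : Matrix (Fin (m₁ + m₂)) (Fin (n₁ + n₂ + 1)) ℤ)
    (hL : ∀ (i : Fin (m₁ + m₂)) (j : Fin (n₁ + n₂ + 1)), (i : ℕ) < m₁ → (j : ℕ) < n₁ →
      A i j = 0 ∨ A i j = 1 ∨ A i j = -1)
    (hzero₁ : ∀ (i : Fin (m₁ + m₂)) (j : Fin (n₁ + n₂ + 1)), (i : ℕ) < m₁ →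
      n₁ ≤ (j : ℕ) → (j : ℕ) < n₁ + n₂ → A i j = 0)
    (hzero₂ : ∀ (i : Fin (m₁ + m₂)) (j : Fin (n₁ + n₂ + 1)), m₁ ≤ (i : ℕ) →
      (j : ℕ) < n₁ → A i j = 0)
    (hR : ∀ (i : Fin (m₁ + m₂)) (j : Fin (n₁ + n₂ + 1)), m₁ ≤ (i : ℕ) →
      n₁ ≤ (j : ℕ) → (j : ℕ) < n₁ + n₂ → A i j = 0 ∨ A i j = 1 ∨ A i j = -1)
    (hu : ∀ i : Fin (m₁ + m₂), (i : ℕ) < m₁ →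
      A i (Fin.last (n₁ + n₂)) = 0 ∨ A i (Fin.last (n₁ + n₂)) = a)
    (hw : ∀ i : Fin (m₁ + m₂), m₁ ≤ (i : ℕ) →
      A i (Fin.last (n₁ + n₂)) = 0 ∨ A i (Fin.last (n₁ + n₂)) = b)
    (hua : ∃ i : Fin (m₁ + m₂), (i : ℕ) < m₁ ∧ A i (Fin.last (n₁ + n₂)) ≠ 0)
    (hwb : ∃ i : Fin (m₁ + m₂), m₁ ≤ (i : ℕ) ∧ A i (Fin.last (n₁ + n₂)) ≠ 0)
    (hunits : ∀ k : ℕ, k < n₁ + n₂ → ∃ i : Fin (m₁ + m₂),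
      ∀ j : Fin (n₁ + n₂ + 1), A i j = if (j : ℕ) = k then 1 else 0)
    (hsub : detSet A ⊆ {a, b, 0}) :
    -- L is totally unimodular
    (∀ (k : ℕ) (f : Fin k → Fin (m₁ + m₂)) (g : Fin k → Fin (n₁ + n₂ + 1)),
      Function.Injective f → Function.Injective g →
      (∀ i, (f i : ℕ) < m₁) → (∀ i, (g i : ℕ) < n₁) →
      (A.submatrix f g).det = 0 ∨ (A.submatrix f g).det = 1 ∨ (A.submatrix f g).det = -1) ∧
    -- R is totally unimodular
    (∀ (k : ℕ) (f : Fin k → Fin (m₁ + m₂)) (g : Fin k → Fin (n₁ + n₂ + 1)),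
      Function.Injective f → Function.Injective g →
      (∀ i, m₁ ≤ (f i : ℕ)) → (∀ i, n₁ ≤ (g i : ℕ) ∧ (g i : ℕ) < n₁ + n₂) →
      (A.submatrix f g).det = 0 ∨ (A.submatrix f g).det = 1 ∨ (A.submatrix f g).det = -1) := by
  constructor
  · -- L is TU
    have keyL : ∀ k : ℕ, ∀ (f : Fin k → Fin (m₁+m₂)) (g : Fin k → Fin (n₁+n₂+1)),
        Function.Injective f → Function.Injective g →
        (∀ i, (f i : ℕ) < m₁) → (∀ i, (g i : ℕ) < n₁) →
        |(A.submatrix f g).det| ≤ 1 := by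
      intro k
      induction k using Nat.strong_induction_on with
      | _ k IHk =>
      intro f g hf hg hfm hgn
      have hent : ∀ i j, (A.submatrix f g) i j = 0 ∨ (A.submatrix f g) i j = 1 ∨
          (A.submatrix f g) i j = -1 := fun i j => hL (f i) (g j) (hfm i) (hgn j)
      have hprop : ∀ s, s < k → ∀ f' g' : Fin s → Fin k, Function.Injective f' →
          Function.Injective g' → |((A.submatrix f g).submatrix f' g').det| ≤ 1 := by
        intro s hs f' g' hf' hg'
        rw [Matrix.submatrix_submatrix]
        exact IHk s hs (f ∘ f') (g ∘ g') (hf.comp hf') (hg.comp hg')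
          (fun i => hfm _) (fun i => hgn _)
      have h2 := camion k _ hent hprop
      obtain ⟨i0, hi0m, hi0v⟩ := hwb
      have hvb : A i0 (Fin.last (n₁+n₂)) = b := (hw i0 hi0m).resolve_left hi0v
      have hmem := construct_mem a b m₁ m₂ n₁ n₂ A hunits hsub k f g hf hg
        (fun i => lt_of_lt_of_le (hgn i) (Nat.le_add_right n₁ n₂)) i0 hi0v
        (fun l => hzero₂ i0 (g l) hi0m (hgn l))
        (fun l h => by have := hfm l; rw [h] at this; omega)
      rw [hvb, abs_of_pos hb] at hmem
      have hd0 : 0 ≤ |(A.submatrix f g).det| := abs_nonneg _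
      simp only [Set.mem_insert_iff, Set.mem_singleton_iff] at hmem
      set d := |(A.submatrix f g).det| with hd
      have hcase : d = 0 ∨ d = 1 ∨ d = 2 := by omega
      rcases hmem with h | h | h <;> rcases hcase with h' | h' | h' <;> rw [h'] at h ⊢ <;> omega
    intro k f g hf hg hfm hgn
    have := keyL k f g hf hg hfm hgn
    rcases abs_le.mp this with ⟨h1, h2⟩
    omega
  · -- R is TU
    intro k f g hf hg hfm hgn
    obtain ⟨i1, hi1m, hi1v⟩ := hua
    have hva : A i1 (Fin.last (n₁+n₂)) = a := (hu i1 hi1m).resolve_left hi1v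
    have hmem := construct_mem a b m₁ m₂ n₁ n₂ A hunits hsub k f g hf hg
      (fun i => (hgn i).2) i1 hi1v
      (fun l => hzero₁ i1 (g l) hi1m (hgn l).1 (hgn l).2)
      (fun l h => by have := hfm l; rw [h] at this; omega)
    rw [hva, abs_of_pos (lt_trans hb hab)] at hmem
    have hd0 : 0 ≤ |(A.submatrix f g).det| := abs_nonneg _
    simp only [Set.mem_insert_iff, Set.mem_singleton_iff] at hmem
    set d := |(A.submatrix f g).det| with hd
    have ha0 : (0:ℤ) < a := lt_trans hb hab
    have hdle : d ≤ 1 := by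
      rcases hmem with h | h | h
      · nlinarith
      · nlinarith
      · nlinarith
    rcases abs_le.mp hdle with ⟨h1, h2⟩
    omega
end

section
/- Let a > b > 0 be integers with gcd(a,b) = 1, and let A ∈ ℤ^{m×n} with m ≥ n and rank(A) = n be {a,b,0}-modular. Then the greatest common divisor of all (n−1)×(n−1) subdeterminants of A equals 1 (equivalently, the (n−1)-th determinantal divisor of A is 1). -/
/-- For an `{a,b,0}`-modular matrix with `a > b > 0` and `gcd(a,b) = 1`, the gcd of all
`(n-1) × (n-1)` subdeterminants of `A` is `1`: every common divisor of all
`(n-1) × (n-1)` subdeterminants is `±1`. -/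
theorem stmt10 (a b : ℤ) (m n : ℕ) (hab : a > b) (hb : 0 < b) (hgcd : Int.gcd a b = 1)
    (hmn : n ≤ m) (A : Matrix (Fin m) (Fin n) ℤ) (hrank : A.rank = n)
    (hmod : detSet A = {a, b, 0}) :
    ∀ c : ℤ, (∀ (f : Fin (n - 1) → Fin m) (g : Fin (n - 1) → Fin n),
      Function.Injective f → Function.Injective g → c ∣ (A.submatrix f g).det) →
      c = 1 ∨ c = -1 := by
  intro c hc
  -- n ≥ 1
  rcases Nat.eq_zero_or_pos n with hn0 | hn
  · exfalso
    subst hn0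
    have h0 : (0 : ℤ) ∈ detSet A := by
      rw [hmod]; simp
    obtain ⟨f, hf, h⟩ := h0
    rw [Matrix.det_fin_zero] at h
    norm_num at h
  obtain ⟨k, rfl⟩ : ∃ k, n = k + 1 := ⟨n - 1, (Nat.succ_pred_eq_of_pos hn).symm⟩
  -- c divides every (k+1)×(k+1) subdeterminant
  have key : ∀ f : Fin (k + 1) → Fin m, Function.Injective f →
      c ∣ (A.submatrix f id).det := by
    intro f hf
    rw [Matrix.det_succ_row_zero]
    apply Finset.dvd_sum
    intro j _
    apply Dvd.dvd.mul_left
    rw [Matrix.submatrix_submatrix]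
    exact hc (f ∘ Fin.succ) (id ∘ j.succAbove)
      (hf.comp (Fin.succ_injective k)) (Fin.succAbove_right_injective.comp Function.injective_id)
  have ha : (a : ℤ) ∈ detSet A := by rw [hmod]; simp
  have hbm : (b : ℤ) ∈ detSet A := by rw [hmod]; simp
  obtain ⟨f, hf, hfa⟩ := ha
  obtain ⟨g, hg, hgb⟩ := hbm
  have hca : c ∣ a := hfa ▸ (dvd_abs c _).mpr (key f hf)
  have hcb : c ∣ b := hgb ▸ (dvd_abs c _).mpr (key g hg)
  have : c ∣ (1 : ℤ) := by
    have h1 : c ∣ ((Int.gcd a b : ℕ) : ℤ) := Int.dvd_coe_gcd hca hcb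
    rw [hgcd] at h1
    exact_mod_cast h1
  exact Int.isUnit_iff.mp (isUnit_of_dvd_one this)
end

section
/- Let a > b > 0 be integers, and let A ∈ ℤ^{m×n} with m ≥ n ≥ 2 be {a,b,0}-modular such that the topmost n−1 rows of A are the unit vectors e₁, …, e_{n−1} ∈ ℤ^n and all entries of the n-th column of A are nonnegative. Then every entry of the n-th column of A lies in {0, a, b}, at least one entry of the n-th column equals b, and if moreover b does not divide a, then at least one entry of the n-th column equals a. -/
/-- If one column of a square matrix is divisible by `s`, then `s` divides the determinant. -/
lemma dvd_det_of_dvd_column {n : ℕ} (B : Matrix (Fin n) (Fin n) ℤ) (j : Fin n) (s : ℤ)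
    (h : ∀ k, s ∣ B k j) : s ∣ B.det := by
  choose u hu using h
  have hB : B = B.updateCol j (s • u) := by
    have : (s • u) = fun k => B k j := by
      funext k; simpa [Pi.smul_apply, smul_eq_mul] using (hu k).symm
    rw [this, Matrix.updateCol_eq_self]
  rw [hB, Matrix.det_updateCol_smul]
  exact Dvd.intro _ rfl

/-- For an `{a,b,0}`-modular matrix (`a > b > 0`) whose topmost `n-1` rows are the unit
vectors and whose `n`-th column is nonnegative: every entry of the `n`-th column lies in
`{0,a,b}`, some entry of the `n`-th column equals `b`, and if `b ∤ a` then some entry of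
the `n`-th column equals `a`. -/
theorem stmt11 (a b : ℤ) (m n : ℕ) (hab : a > b) (hb : 0 < b)
    (hmn : n ≤ m) (hn : 2 ≤ n)
    (A : Matrix (Fin m) (Fin n) ℤ) (hmod : detSet A = {a, b, 0})
    (hunit : ∀ i : Fin m, (i : ℕ) < n - 1 →
      ∀ j : Fin n, A i j = if (i : ℕ) = (j : ℕ) then 1 else 0)
    (hnonneg : ∀ (i : Fin m) (j : Fin n), (j : ℕ) = n - 1 → 0 ≤ A i j) :
    (∀ (i : Fin m) (j : Fin n), (j : ℕ) = n - 1 → A i j = 0 ∨ A i j = a ∨ A i j = b) ∧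
    (∃ (i : Fin m) (j : Fin n), (j : ℕ) = n - 1 ∧ A i j = b) ∧
    (¬ b ∣ a → ∃ (i : Fin m) (j : Fin n), (j : ℕ) = n - 1 ∧ A i j = a) := by
  have hn1 : n - 1 < n := by omega
  set jl : Fin n := ⟨n - 1, hn1⟩ with hjl
  -- Part 1
  have part1 : ∀ (i : Fin m) (j : Fin n), (j : ℕ) = n - 1 →
      A i j = 0 ∨ A i j = a ∨ A i j = b := by
    intro i j hj
    have hjj : j = jl := Fin.ext (by simp [hjl, hj])
    subst hjj
    by_cases hi : (i : ℕ) < n - 1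
    · left
      have h := hunit i hi jl
      rw [h, if_neg (by simp [hjl]; omega)]
    · -- build the submatrix with unit rows and row i
      set f : Fin n → Fin m := fun k => if h : (k : ℕ) < n - 1 then ⟨k, by omega⟩ else i
        with hf
      have hfinj : Function.Injective f := by
        intro k1 k2 h12
        apply Fin.ext
        by_cases h1 : (k1 : ℕ) < n - 1 <;> by_cases h2 : (k2 : ℕ) < n - 1 <;>
          simp only [hf, dif_pos, dif_neg, h1, h2] at h12
        · have := congrArg Fin.val h12; simp at this; omega
        · have := congrArg Fin.val h12; simp at this; omega
        · have := congrArg Fin.val h12; simp at this; omega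
        · have h1' : (k1 : ℕ) < n := k1.isLt
          have h2' : (k2 : ℕ) < n := k2.isLt
          omega
      have hdet : (A.submatrix f id).det = A i jl := by
        rw [Matrix.det_of_lowerTriangular]
        · have : ∀ k : Fin n, (A.submatrix f id) k k =
              if (k : ℕ) < n - 1 then 1 else A i jl := by
            intro k
            by_cases hk : (k : ℕ) < n - 1
            · rw [if_pos hk]
              have := hunit ⟨(k : ℕ), by omega⟩ hk k
              simp [Matrix.submatrix, hf, hk, this]
            · rw [if_neg hk]
              have hkk : k = jl := Fin.ext (by simp [hjl]; omega)
              simp [Matrix.submatrix, hf, hk, hkk, hjl]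
          rw [Finset.prod_congr rfl (fun k _ => this k)]
          rw [Finset.prod_eq_single jl]
          · simp [hjl]
          · intro k _ hk
            have : (k : ℕ) < n := k.isLt
            have hkne : (k : ℕ) ≠ n - 1 := fun h => hk (Fin.ext (by simp [hjl, h]))
            rw [if_pos (by omega)]
          · intro h
            exact absurd (Finset.mem_univ jl) h
        · intro k l hkl
          -- toDual l < toDual k means k < l
          have hkl' : k < l := by exact hkl
          by_cases hk : (k : ℕ) < n - 1
          · have := hunit ⟨(k : ℕ), by omega⟩ hk l
            simp [Matrix.submatrix, hf, hk, this]
            omega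
          · exfalso
            have : (l : ℕ) < n := l.isLt
            have : (k : ℕ) < (l : ℕ) := hkl'
            omega
      have hmem : A i jl ∈ detSet A := by
        refine ⟨f, hfinj, ?_⟩
        rw [hdet, abs_of_nonneg (hnonneg i jl rfl)]
      rw [hmod] at hmem
      simp only [Set.mem_insert_iff, Set.mem_singleton_iff] at hmem
      tauto
  refine ⟨part1, ?_, ?_⟩
  · -- some entry equals b
    by_contra hcon
    push_neg at hcon
    have hbmem : b ∈ detSet A := by rw [hmod]; simp
    obtain ⟨f, hfinj, hfdet⟩ := hbmem
    have hdvd : a ∣ (A.submatrix f id).det := by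
      apply dvd_det_of_dvd_column _ jl
      intro k
      rcases part1 (f k) jl rfl with h | h | h
      · simp [Matrix.submatrix, h]
      · simp [Matrix.submatrix, h]
      · exact absurd h (hcon (f k) jl rfl)
    have : a ∣ b := by rw [hfdet]; exact (dvd_abs _ _).mpr hdvd
    have := Int.le_of_dvd hb this
    omega
  · intro hba
    by_contra hcon
    push_neg at hcon
    have hamem : a ∈ detSet A := by rw [hmod]; simp
    obtain ⟨f, hfinj, hfdet⟩ := hamem
    have hdvd : b ∣ (A.submatrix f id).det := by
      apply dvd_det_of_dvd_column _ jl
      intro k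
      rcases part1 (f k) jl rfl with h | h | h
      · simp [Matrix.submatrix, h]
      · exact absurd h (hcon (f k) jl rfl)
      · simp [Matrix.submatrix, h]
    have : b ∣ a := by rw [hfdet]; exact (dvd_abs _ _).mpr hdvd
    exact hba this
end

section
/- Let B ∈ ℤ^{m×n} with m ≤ n and rank(B) = m, let b ∈ ℤ^m, and let γ be the greatest common divisor of the elements of D(B^T). Suppose the system B·x = b has at least one solution x ∈ ℤ^n. Then there exist x₀ ∈ ℤ^n and N ∈ ℤ^{n×(n−m)} such that {x ∈ ℤ^n : B·x = b} = {x₀ + N·y : y ∈ ℤ^{n−m}} and D(N) = {k/γ : k ∈ D(B^T)}. Consequently, the map y ↦ x₀ + N·y is a bijection from {y ∈ ℤ^{n−m} : −N·y ≤ x₀} onto {x ∈ ℤ^n : B·x = b, x ≥ 0}, and the constraint matrix C := −N of this inequality system satisfies D(C) = {k/γ : k ∈ D(B^T)}. -/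
open Matrix Function

section aux
variable {α β : Type*} [Fintype α] [Fintype β] [DecidableEq α] [DecidableEq β]

lemma aux_block_det (F G : Matrix (α ⊕ β) (α ⊕ β) ℤ) (hFG : F * G = 1) :
    F.det * (G.toBlocks₂₂).det = (F.toBlocks₁₁).det := by
  have hcomp : ∀ a b, ∑ c : α ⊕ β, F a c * G c b = (1 : Matrix (α ⊕ β) (α ⊕ β) ℤ) a b := by
    intro a b
    rw [← Matrix.mul_apply, hFG]
  have key : F * Matrix.fromBlocks 1 G.toBlocks₁₂ 0 G.toBlocks₂₂ =
      Matrix.fromBlocks F.toBlocks₁₁ 0 F.toBlocks₂₁ 1 := by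
    ext a b
    rw [Matrix.mul_apply, Fintype.sum_sum_type]
    cases b with
    | inl j =>
      cases a <;>
        simp [Matrix.one_apply, Matrix.toBlocks₁₁, Matrix.toBlocks₂₁, mul_ite,
          Finset.sum_ite_eq']
    | inr j =>
      have h := hcomp a (Sum.inr j)
      rw [Fintype.sum_sum_type] at h
      cases a <;>
        · simp only [Matrix.fromBlocks_apply₁₁, Matrix.fromBlocks_apply₁₂,
            Matrix.fromBlocks_apply₂₁, Matrix.fromBlocks_apply₂₂, Matrix.toBlocks₁₂,
            Matrix.toBlocks₂₂, Matrix.of_apply] at h ⊢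
          rw [h]
          simp [Matrix.one_apply]
  have hdet := congrArg Matrix.det key
  rwa [Matrix.det_mul, Matrix.det_fromBlocks_zero₂₁, Matrix.det_fromBlocks_zero₁₂, Matrix.det_one,
    one_mul, Matrix.det_one, mul_one] at hdet
end aux

lemma aux_dvd_det_mul {κ ν : Type*} [Fintype κ] [Fintype ν] [DecidableEq κ]
    (W : Matrix κ ν ℤ) (N : Matrix ν κ ℤ) (c : ℤ)
    (h : ∀ g : κ → ν, Function.Injective g → c ∣ (N.submatrix g id).det) :
    c ∣ (W * N).det := by
  classical
  have hWN : (W * N) = fun i => ∑ j : ν, W i j • (N j : κ → ℤ) := by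
    funext i j'
    simp [Matrix.mul_apply, Finset.sum_apply]
  have hdet : (W * N).det =
      ∑ r : κ → ν, (∏ i, W i (r i)) • Matrix.det (N.submatrix r id) := by
    rw [Matrix.det, hWN, ← AlternatingMap.coe_multilinearMap, MultilinearMap.map_sum]
    refine Finset.sum_congr rfl fun r _ => ?_
    rw [MultilinearMap.map_smul_univ]
    rfl
  rw [hdet]
  refine Finset.dvd_sum fun r _ => ?_
  by_cases hr : Function.Injective r
  · exact Dvd.dvd.mul_left (h r hr) _
  · obtain ⟨a, b, hab, hne⟩ := Function.not_injective_iff.mp hr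
    have : (N.submatrix r id).det = 0 :=
      Matrix.det_zero_of_row_eq hne (by funext j; simp [hab])
    simp [this]

lemma aux_exists_compl {p q n : ℕ} (h : p + q = n) (g : Fin q → Fin n)
    (hg : Function.Injective g) :
    ∃ f : Fin p → Fin n, Function.Bijective (Sum.elim f g) := by
  classical
  set T : Finset (Fin n) := Finset.univ \ Finset.univ.image g with hT
  have hTcard : T.card = p := by
    rw [hT, Finset.card_sdiff_of_subset (Finset.subset_univ _), Finset.card_univ,
      Finset.card_image_of_injective _ hg, Finset.card_univ, Fintype.card_fin,
      Fintype.card_fin]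
    omega
  refine ⟨fun i => (T.orderIsoOfFin hTcard i : Fin n), ?_⟩
  have hfT : ∀ i, ((T.orderIsoOfFin hTcard i : Fin n)) ∈ T := fun i =>
    (T.orderIsoOfFin hTcard i).2
  have hinj : Function.Injective (Sum.elim (fun i => (T.orderIsoOfFin hTcard i : Fin n)) g) := by
    intro a b hab
    cases a <;> cases b <;> simp only [Sum.elim_inl, Sum.elim_inr] at hab
    · rename_i i j
      have := (T.orderIsoOfFin hTcard).injective (Subtype.ext hab)
      rw [this]
    · rename_i i j
      exfalso
      have := hfT i
      rw [hab, hT] at this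
      simp at this
    · rename_i i j
      exfalso
      have := hfT j
      rw [← hab, hT] at this
      simp at this
    · rename_i i j
      rw [hg hab]
  rw [Fintype.bijective_iff_injective_and_card]
  refine ⟨hinj, by simp [h]⟩

/-- Reduction of a feasible standard form system `B·x = b, x ≥ 0` (with `rank B = m` and
`γ = gcd(D(B.transpose))`) to inequality form: the integer solutions of `B·x = b` are
`{x₀ + N·y : y ∈ ℤ^{n−m}}` with `D(N) = (1/γ)·D(B.transpose)`, whence `y ↦ x₀ + N·y` is a
bijection from `{y : −N·y ≤ x₀}` onto `{x : B·x = b, x ≥ 0}`, and the constraint matrix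
`C := −N` satisfies `D(C) = (1/γ)·D(B.transpose)`. -/
theorem stmt12 (m k n : ℕ) (hmk : m + k = n)
    (B : Matrix (Fin m) (Fin n) ℤ) (hrank : B.rank = m)
    (bvec : Fin m → ℤ) (γ : ℤ) (hγ : 0 < γ)
    (hdvd : ∀ d ∈ detSet B.transpose, γ ∣ d)
    (hgcd : ∀ c : ℤ, (∀ d ∈ detSet B.transpose, c ∣ d) → c ∣ γ)
    (hfeas : ∃ x : Fin n → ℤ, B.mulVec x = bvec) :
    ∃ (x₀ : Fin n → ℤ) (N : Matrix (Fin n) (Fin k) ℤ),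
      ({x : Fin n → ℤ | B.mulVec x = bvec} =
        {x : Fin n → ℤ | ∃ y : Fin k → ℤ, x = x₀ + N.mulVec y}) ∧
      detSet N = (fun d => d / γ) '' detSet B.transpose ∧
      Set.BijOn (fun y : Fin k → ℤ => x₀ + N.mulVec y)
        {y : Fin k → ℤ | ∀ i, -(N.mulVec y i) ≤ x₀ i}
        {x : Fin n → ℤ | B.mulVec x = bvec ∧ ∀ i, 0 ≤ x i} ∧
      detSet (-N) = (fun d => d / γ) '' detSet B.transpose := by
  classical
  obtain ⟨x₀, hx₀⟩ := hfeas
  set φ : (Fin n → ℤ) →ₗ[ℤ] (Fin m → ℤ) := B.mulVecLin with hφ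
  set K := LinearMap.ker φ with hKdef
  set Q := LinearMap.range φ with hQdef
  obtain ⟨r, bQ⟩ := Submodule.basisOfPid (Pi.basisFun ℤ (Fin m)) Q
  obtain ⟨k', bK⟩ := Submodule.basisOfPid (Pi.basisFun ℤ (Fin n)) K
  haveI : Module.Free ℤ Q := Module.Free.of_basis bQ
  haveI : Module.Finite ℤ Q := Module.Finite.of_basis bQ
  haveI : Module.Free ℤ K := Module.Free.of_basis bK
  haveI : Module.Finite ℤ K := Module.Finite.of_basis bK
  set π : (Fin n → ℤ) →ₗ[ℤ] Q := φ.rangeRestrict with hπdef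
  obtain ⟨s, hs⟩ := Module.projective_lifting_property π LinearMap.id
    φ.surjective_rangeRestrict
  have hπs : ∀ q : Q, π (s q) = q := fun q => congrFun (congrArg DFunLike.coe hs) q
  have hφs : ∀ q : Q, φ (s q) = (q : Fin m → ℤ) := by
    intro q
    have : (π (s q) : Fin m → ℤ) = φ (s q) := rfl
    rw [← this, hπs]
  have hπval : ∀ x, (π x : Fin m → ℤ) = φ x := fun x => rfl
  have hmemK : ∀ x, x - s (π x) ∈ K := by
    intro x
    rw [hKdef, LinearMap.mem_ker, map_sub, hφs, hπval, sub_self]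
  set fwd : (Fin n → ℤ) →ₗ[ℤ] K × Q :=
    LinearMap.prod ((LinearMap.id - s.comp π).codRestrict K hmemK) π with hfwd
  set bwd : K × Q →ₗ[ℤ] (Fin n → ℤ) := (K.subtype).coprod s with hbwd
  have hπK : ∀ x ∈ K, π x = 0 := by
    intro x hx
    apply Subtype.ext
    rw [hπval]
    simpa [hKdef, LinearMap.mem_ker] using hx
  have h1 : fwd.comp bwd = LinearMap.id := by
    apply LinearMap.ext
    rintro ⟨⟨a, ha⟩, q⟩
    have hπa : π (a + s q) = q := by
      rw [map_add, hπK a ha, hπs, zero_add]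
    refine Prod.ext (Subtype.ext ?_) ?_
    · show (a + s q) - s (π (a + s q)) = a
      rw [hπa]; abel
    · show π (a + s q) = q
      exact hπa
  have h2 : bwd.comp fwd = LinearMap.id := by
    apply LinearMap.ext
    intro x
    show (x - s (π x)) + s (π x) = x
    abel
  set e : (Fin n → ℤ) ≃ₗ[ℤ] K × Q := LinearEquiv.ofLinear fwd bwd h1 h2 with he
  have hfrQ : Module.finrank ℤ Q = m := hrank
  have hr : r = m := by
    have := Module.finrank_eq_card_basis bQ
    rw [hfrQ, Fintype.card_fin] at this
    omega
  have hk' : k' = k := by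
    have h3 := e.finrank_eq
    rw [Module.finrank_fin_fun, Module.finrank_prod] at h3
    have h4 := Module.finrank_eq_card_basis bK
    rw [Fintype.card_fin] at h4
    rw [h4, hfrQ] at h3
    omega
  set bK2 : Module.Basis (Fin k) ℤ K := bK.reindex (finCongr hk') with hbK2
  set bQ2 : Module.Basis (Fin m) ℤ Q := bQ.reindex (finCongr hr) with hbQ2
  set cb : Module.Basis (Fin m ⊕ Fin k) ℤ (Fin n → ℤ) :=
    ((bK2.prod bQ2).map e.symm).reindex (Equiv.sumComm (Fin k) (Fin m)) with hcb
  have hcinr : ∀ j, cb (Sum.inr j) = (bK2 j : Fin n → ℤ) := by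
    intro j
    rw [hcb, Module.Basis.reindex_apply, Module.Basis.map_apply]
    have h5 : (Equiv.sumComm (Fin k) (Fin m)).symm (Sum.inr j) = Sum.inl j := rfl
    rw [h5, Module.Basis.prod_apply]
    simp only [Sum.elim_inl, Function.comp_apply, LinearMap.coe_inl]
    show bwd (bK2 j, 0) = _
    rw [hbwd]
    simp
  have hcK : ∀ j, φ (cb (Sum.inr j)) = 0 := by
    intro j
    rw [hcinr]
    exact LinearMap.mem_ker.mp (bK2 j).2
  set U : Matrix (Fin n) (Fin m ⊕ Fin k) ℤ := (Pi.basisFun ℤ (Fin n)).toMatrix cb with hU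
  set V : Matrix (Fin m ⊕ Fin k) (Fin n) ℤ := cb.toMatrix (Pi.basisFun ℤ (Fin n)) with hV
  have hUV : U * V = 1 := Module.Basis.toMatrix_mul_toMatrix_flip _ _
  have hVU : V * U = 1 := Module.Basis.toMatrix_mul_toMatrix_flip _ _
  have hUapp : ∀ i a, U i a = cb a i := by
    intro i a
    rw [hU, Module.Basis.toMatrix_apply, Pi.basisFun_repr]
  set N : Matrix (Fin n) (Fin k) ℤ := Matrix.of fun i j => cb (Sum.inr j) i with hN
  set A : Matrix (Fin m) (Fin m) ℤ := Matrix.of fun i c => (B * U) i (Sum.inl c) with hA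
  have hBU0 : ∀ i j, (B * U) i (Sum.inr j) = 0 := by
    intro i j
    rw [Matrix.mul_apply]
    have h6 : ∑ l, B i l * U l (Sum.inr j) = φ (cb (Sum.inr j)) i := by
      rw [hφ]
      simp only [Matrix.mulVecLin_apply, Matrix.mulVec, dotProduct]
      refine Finset.sum_congr rfl fun l _ => ?_
      rw [hUapp]
    rw [h6, hcK]
    rfl
  have hBN : B * N = 0 := by
    ext i j
    rw [Matrix.mul_apply]
    have h6 : ∑ l, B i l * N l j = φ (cb (Sum.inr j)) i := by
      rw [hφ]
      simp only [Matrix.mulVecLin_apply, Matrix.mulVec, dotProduct]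
      rfl
    rw [h6, hcK]
    rfl
  have hdecomp : ∀ f : Fin m → Fin n, B.submatrix id f = A * V.submatrix Sum.inl f := by
    intro f
    have hB1 : B = (B * U) * V := by rw [Matrix.mul_assoc, hUV, Matrix.mul_one]
    ext i j
    rw [Matrix.submatrix_apply, id_eq]
    conv_lhs => rw [hB1]
    rw [Matrix.mul_apply, Fintype.sum_sum_type]
    have h7 : ∀ c : Fin k, (B * U) i (Sum.inr c) * V (Sum.inr c) (f j) = 0 := fun c => by
      rw [hBU0]; ring
    rw [Finset.sum_congr rfl fun c _ => h7 c, Finset.sum_const_zero, add_zero]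
    rw [Matrix.mul_apply]
    rfl
  have hjac : ∀ pe : (Fin m ⊕ Fin k) ≃ Fin n,
      |Matrix.det (V.submatrix Sum.inl (pe ∘ Sum.inl))| =
        |Matrix.det (N.submatrix (pe ∘ Sum.inr) id)| := by
    intro pe
    set F := V.submatrix id pe with hF
    set G := U.submatrix pe id with hG
    have hFG : F * G = 1 := by
      ext a b
      rw [Matrix.mul_apply]
      have h8 : ∀ c, F a c * G c b = V a (pe c) * U (pe c) b := fun c => rfl
      rw [Finset.sum_congr rfl fun c _ => h8 c,
        Equiv.sum_comp pe (fun c' => V a c' * U c' b), ← Matrix.mul_apply, hVU]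
    have hmain := aux_block_det F G hFG
    have h11 : F.toBlocks₁₁ = V.submatrix Sum.inl (pe ∘ Sum.inl) := by
      ext i j; rfl
    have h22 : G.toBlocks₂₂ = N.submatrix (pe ∘ Sum.inr) id := by
      ext i j
      show U (pe (Sum.inr i)) (Sum.inr j) = N (pe (Sum.inr i)) j
      rw [hUapp]
      rfl
    have hunit : IsUnit F.det :=
      IsUnit.of_mul_eq_one G.det (by rw [← Matrix.det_mul, hFG, Matrix.det_one])
    rw [← h11, ← h22, ← hmain, abs_mul]
    rcases Int.isUnit_iff.mp hunit with h | h <;> rw [h] <;> simp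
  have hminor : ∀ pe : (Fin m ⊕ Fin k) ≃ Fin n,
      |Matrix.det (B.submatrix id (pe ∘ Sum.inl))| =
        |A.det| * |Matrix.det (N.submatrix (pe ∘ Sum.inr) id)| := by
    intro pe
    rw [hdecomp, Matrix.det_mul, abs_mul, hjac pe]
  have htrans : ∀ f : Fin m → Fin n,
      (B.transpose.submatrix f id) = (B.submatrix id f).transpose := by
    intro f; ext i j; rfl
  have hAd : ∀ d ∈ detSet B.transpose, |A.det| ∣ d := by
    rintro d ⟨f, hf, rfl⟩
    rw [htrans, Matrix.det_transpose, hdecomp f, Matrix.det_mul, abs_mul]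
    exact dvd_mul_right _ _
  have hA_dvd_γ : |A.det| ∣ γ := hgcd _ hAd
  set GS : Finset (Fin k → Fin n) := Finset.univ.filter Function.Injective with hGS
  have hγ_dvd : γ ∣ |A.det| := by
    have h1' : ∀ g ∈ GS, γ ∣ A.det * (N.submatrix g id).det := by
      intro g hgmem
      have hginj : Function.Injective g := (Finset.mem_filter.mp hgmem).2
      obtain ⟨f, hbij⟩ := aux_exists_compl hmk g hginj
      set pe := Equiv.ofBijective _ hbij with hpe
      have hfinj : Function.Injective f := by
        intro a b hab
        have := hbij.1 (a₁ := Sum.inl a) (a₂ := Sum.inl b) hab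
        simpa using this
      have hmem : |Matrix.det (B.transpose.submatrix f id)| ∈ detSet B.transpose :=
        ⟨f, hfinj, rfl⟩
      have hdd := hdvd _ hmem
      rw [htrans, Matrix.det_transpose] at hdd
      have hpe1 : pe ∘ Sum.inl = f := rfl
      have hpe2 : pe ∘ Sum.inr = g := rfl
      have := hminor pe
      rw [hpe1, hpe2] at this
      rw [this] at hdd
      rw [← abs_mul] at hdd
      exact (dvd_abs _ _).mp hdd
    have h2' : γ ∣ GS.gcd fun g => A.det * (N.submatrix g id).det := Finset.dvd_gcd h1'
    rw [Finset.gcd_mul_left] at h2'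
    have h3' : (GS.gcd fun g => (N.submatrix g id).det) ∣ 1 := by
      have hWN : (V.submatrix Sum.inr id) * N = 1 := by
        ext i j
        rw [Matrix.mul_apply]
        have h9 : ∀ l, (V.submatrix Sum.inr id) i l * N l j = V (Sum.inr i) l * U l (Sum.inr j) := by
          intro l
          rw [Matrix.submatrix_apply, hUapp]
          rfl
        rw [Finset.sum_congr rfl fun l _ => h9 l, ← Matrix.mul_apply, hVU]
        simp [Matrix.one_apply]
      have h10 := aux_dvd_det_mul (V.submatrix Sum.inr id) N
        (GS.gcd fun g => (N.submatrix g id).det)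
        (fun g hginj => Finset.gcd_dvd (by simp [hGS, hginj]))
      rwa [hWN, Matrix.det_one] at h10
    calc γ ∣ normalize A.det * GS.gcd fun g => (N.submatrix g id).det := h2'
      _ ∣ normalize A.det * 1 := mul_dvd_mul_left _ h3'
      _ = |A.det| := by rw [mul_one, ← Int.abs_eq_normalize]
  have hγA : γ = |A.det| := Int.dvd_antisymm hγ.le (abs_nonneg _) hγ_dvd hA_dvd_γ
  -- detSet equality
  have hsetdet : detSet N = (fun d => d / γ) '' detSet B.transpose := by
    ext d
    constructor
    · rintro ⟨g, hginj, rfl⟩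
      obtain ⟨f, hbij⟩ := aux_exists_compl hmk g hginj
      set pe := Equiv.ofBijective _ hbij with hpe
      have hfinj : Function.Injective f := by
        intro a b hab
        have := hbij.1 (a₁ := Sum.inl a) (a₂ := Sum.inl b) hab
        simpa using this
      refine ⟨|Matrix.det (B.transpose.submatrix f id)|, ⟨f, hfinj, rfl⟩, ?_⟩
      rw [htrans, Matrix.det_transpose]
      have := hminor pe
      have hpe1 : pe ∘ Sum.inl = f := rfl
      have hpe2 : pe ∘ Sum.inr = g := rfl
      rw [hpe1, hpe2] at this
      rw [this, ← hγA]
      exact Int.mul_ediv_cancel_left _ hγ.ne'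
    · rintro ⟨d0, ⟨f, hfinj, rfl⟩, rfl⟩
      obtain ⟨g, hbij⟩ := aux_exists_compl (show k + m = n by omega) f hfinj
      set pe := (Equiv.sumComm (Fin m) (Fin k)).trans (Equiv.ofBijective _ hbij) with hpe
      have hpe1 : pe ∘ Sum.inl = f := rfl
      have hpe2 : pe ∘ Sum.inr = g := rfl
      have hginj : Function.Injective g := by
        intro a b hab
        have := hbij.1 (a₁ := Sum.inl a) (a₂ := Sum.inl b) hab
        simpa using this
      refine ⟨g, hginj, ?_⟩
      rw [htrans, Matrix.det_transpose]
      have := hminor pe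
      rw [hpe1, hpe2] at this
      rw [this, ← hγA]
      exact Int.mul_ediv_cancel_left _ hγ.ne'
  -- structure of solution set
  have hNy : ∀ y, B.mulVec (N.mulVec y) = 0 := fun y => by
    rw [Matrix.mulVec_mulVec, hBN, Matrix.zero_mulVec]
  have hNmul : ∀ w : Fin k → ℤ, N.mulVec w = ∑ j, w j • ((bK2 j : Fin n → ℤ)) := by
    intro w
    funext i
    rw [Finset.sum_apply]
    simp only [Pi.smul_apply, smul_eq_mul]
    show ∑ j, N i j * w j = _
    refine Finset.sum_congr rfl fun j _ => ?_
    have hNij : N i j = (bK2 j : Fin n → ℤ) i := by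
      show cb (Sum.inr j) i = _
      rw [hcinr]
    rw [hNij, mul_comm]
  have hker_to_N : ∀ x, B.mulVec x = 0 → ∃ y, x = N.mulVec y := by
    intro x hx
    have hxK : x ∈ K := LinearMap.mem_ker.mpr hx
    refine ⟨fun j => bK2.repr ⟨x, hxK⟩ j, ?_⟩
    have hsum := bK2.sum_repr ⟨x, hxK⟩
    have hval : ((∑ j, bK2.repr ⟨x, hxK⟩ j • bK2 j : K) : Fin n → ℤ) = x := by rw [hsum]
    rw [hNmul]
    conv_lhs => rw [← hval]
    rw [AddSubmonoidClass.coe_finset_sum]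
    refine Finset.sum_congr rfl fun j _ => ?_
    rw [SetLike.val_smul]
  have hNinj : ∀ y z : Fin k → ℤ, N.mulVec y = N.mulVec z → y = z := by
    intro y z hyz
    have hlin : LinearIndependent ℤ (fun j => (bK2 j : Fin n → ℤ)) :=
      bK2.linearIndependent.map' K.subtype (Submodule.ker_subtype K)
    have hsub : N.mulVec (y - z) = 0 := by
      have := N.mulVecLin.map_sub y z
      simp only [Matrix.mulVecLin_apply] at this
      rw [this, hyz, sub_self]
    have h0 : ∑ j, (y - z) j • ((bK2 j : Fin n → ℤ)) = 0 := by
      rw [← hNmul, hsub]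
    have hz := Fintype.linearIndependent_iff.mp hlin (fun j => (y - z) j) h0
    funext j
    have := hz j
    simp only [Pi.sub_apply, sub_eq_zero] at this
    exact this
  have hset : {x : Fin n → ℤ | B.mulVec x = bvec} =
      {x : Fin n → ℤ | ∃ y : Fin k → ℤ, x = x₀ + N.mulVec y} := by
    ext x
    constructor
    · intro hx
      obtain ⟨y, hy⟩ := hker_to_N (x - x₀) (by
        have : B.mulVec (x - x₀) = B.mulVec x - B.mulVec x₀ := B.mulVecLin.map_sub x x₀
        rw [this, hx, hx₀, sub_self])
      exact ⟨y, by rw [← hy]; abel⟩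
    · rintro ⟨y, rfl⟩
      show B.mulVec _ = bvec
      rw [Matrix.mulVec_add, hx₀, hNy, add_zero]
  have hnegdet : detSet (-N) = detSet N := by
    have habs : ∀ (M : Matrix (Fin n) (Fin k) ℤ) (g : Fin k → Fin n),
        |((-M).submatrix g id).det| = |(M.submatrix g id).det| := by
      intro M g
      have : ((-M).submatrix g id) = -(M.submatrix g id) := by ext i j; simp
      rw [this, Matrix.det_neg, abs_mul, abs_pow, abs_neg, abs_one, one_pow, one_mul]
    ext d
    constructor
    · rintro ⟨g, hg, rfl⟩
      exact ⟨g, hg, (habs N g)⟩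
    · rintro ⟨g, hg, rfl⟩
      exact ⟨g, hg, (habs N g).symm⟩
  clear_value N
  refine ⟨x₀, N, hset, hsetdet, ?_, by rw [hnegdet]; exact hsetdet⟩
  refine ⟨?_, ?_, ?_⟩
  · intro y hy
    constructor
    · show B.mulVec _ = bvec
      rw [Matrix.mulVec_add, hx₀, hNy, add_zero]
    · intro i
      have := hy i
      show 0 ≤ x₀ i + N.mulVec y i
      linarith only [this]
  · intro y _ z _ hyz
    have : N.mulVec y = N.mulVec z := by
      have := add_left_cancel hyz
      exact this
    exact hNinj _ _ this
  · intro x hx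
    obtain ⟨hx1, hx2⟩ := hx
    have : x ∈ {x : Fin n → ℤ | ∃ y : Fin k → ℤ, x = x₀ + N.mulVec y} := by
      rw [← hset]; exact hx1
    obtain ⟨y, hy⟩ := this
    refine ⟨y, ?_, hy.symm⟩
    intro i
    have := hx2 i
    rw [hy] at this
    have h' : (x₀ + N.mulVec y) i = x₀ i + N.mulVec y i := rfl
    rw [h'] at this
    linarith only [this]
end
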